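/- arXiv:2503.20393 — 4 statements merged into one kernel-verified Lean document; each statement's English description precedes it below -/
import Mathlib

section
/- Concordance representation: let ν be the Markov product law of (X, Y) on ℝ². Then α(X) · Λ(Y|X) = (ν ⊗ ν){ ((y₁, y₁'), (y₂, y₂')) ∈ ℝ² × ℝ² : (y₁ − y₂)(y₁' − y₂') > 0 } − (ν ⊗ ν){ ((y₁, y₁'), (y₂, y₂')) ∈ ℝ² × ℝ² : (y₁ − y₂)(y₁' − y₂') < 0 }. -/
open MeasureTheory ProbabilityTheory Set Filter Topology
open scoped ENNReal

/-- The (nonparametric) relative effect `Ψ(μ, ν) = ∫ μ((-∞,y)) + (1/2) μ({y}) dν(y)`. -/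
noncomputable def relEffect (μ ν : Measure ℝ) : ℝ :=
  ∫ y, ((μ (Set.Iio y)).toReal + (1 / 2) * (μ {y}).toReal) ∂ν

/-- `α(μ) = 1 - ∫ μ({x}) dμ(x) = 1 - P(X = X*)`, the non-discrete mass of `μ`. -/
noncomputable def alphaCoeff {E : Type*} [MeasurableSpace E] (μ : Measure E) : ℝ :=
  1 - ∫ x, (μ {x}).toReal ∂μ

/-- The coefficient of separation `Λ(Y|X)`. -/
noncomputable def sepCoeff {Ω E : Type*} [MeasurableSpace Ω] [MeasurableSpace E]
    (P : Measure Ω) [IsFiniteMeasure P] (Y : Ω → ℝ) (X : Ω → E) : ℝ :=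
  (alphaCoeff (P.map X))⁻¹ *
    ∫ x : E × E,
      (relEffect (condDistrib Y X P x.1) (condDistrib Y X P x.2)
        - relEffect (condDistrib Y X P x.2) (condDistrib Y X P x.1)) ^ 2
      ∂((P.map X).prod (P.map X))

/-- A random variable is non-degenerate if it is not a.s. constant. -/
def Nondegenerate {Ω α : Type*} [MeasurableSpace Ω] (P : Measure Ω) (Z : Ω → α) : Prop :=
  ¬ ∃ c, ∀ᵐ ω ∂P, Z ω = c

/-- The Markov product law of `(X, Y)`: the law on `ℝ²` of a pair `(Y, Y')` that is
conditionally i.i.d. given `X`, i.e. `ν(B) = ∫ (κ(x) ⊗ κ(x))(B) dμ_X(x)`. -/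
noncomputable def markovProd {Ω E : Type*} [MeasurableSpace Ω] [MeasurableSpace E]
    (P : Measure Ω) [IsFiniteMeasure P] (Y : Ω → ℝ) (X : Ω → E) : Measure (ℝ × ℝ) :=
  (P.map X).bind fun x => (condDistrib Y X P x).prod (condDistrib Y X P x)

namespace ConcAux

/-- The strict lower-triangle set. -/
def uS : Set (ℝ × ℝ) := {p | p.1 < p.2}
def vS : Set (ℝ × ℝ) := {p | p.2 < p.1}
def dS : Set (ℝ × ℝ) := {p | p.1 = p.2}

lemma uS_mble : MeasurableSet uS := measurableSet_lt measurable_fst measurable_snd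
lemma vS_mble : MeasurableSet vS := measurableSet_lt measurable_snd measurable_fst
lemma dS_mble : MeasurableSet dS := measurableSet_eq_fun measurable_fst measurable_snd

lemma measurable_meas_Iio (μ : Measure ℝ) : Measurable fun y => μ (Set.Iio y) := by
  have hmono : Monotone fun y => μ (Set.Iio y) :=
    fun _ _ h => measure_mono (Set.Iio_subset_Iio h)
  exact hmono.measurable

lemma meas_singleton_eq (μ : Measure ℝ) [IsFiniteMeasure μ] (y : ℝ) :
    μ {y} = μ (Set.Iic y) - μ (Set.Iio y) := by
  have hd : Disjoint (Set.Iio y) ({y} : Set ℝ) :=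
    Set.disjoint_singleton_right.2 (by simp)
  have h : μ (Set.Iic y) = μ (Set.Iio y) + μ {y} := by
    rw [← measure_union hd (measurableSet_singleton y)]
    congr 1
    ext x
    simp [le_iff_lt_or_eq]
  rw [h, ENNReal.add_sub_cancel_left (measure_ne_top _ _)]

lemma measurable_meas_singleton (μ : Measure ℝ) [IsFiniteMeasure μ] :
    Measurable fun y => μ {y} := by
  simp only [meas_singleton_eq μ]
  have hmono : Monotone fun y => μ (Set.Iic y) :=
    fun _ _ h => measure_mono (Set.Iic_subset_Iic.2 h)
  exact hmono.measurable.sub (measurable_meas_Iio μ)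

lemma relEffect_eq (μ₁ μ₂ : Measure ℝ) [IsProbabilityMeasure μ₁] [IsProbabilityMeasure μ₂] :
    relEffect μ₁ μ₂ = ((μ₁.prod μ₂) uS).toReal + (1 / 2) * ((μ₁.prod μ₂) dS).toReal := by
  have hfin : ∀ (s : Set ℝ), μ₁ s ≠ ⊤ := fun s => measure_ne_top _ _
  have hup : (μ₁.prod μ₂) uS = ∫⁻ y, μ₁ (Set.Iio y) ∂μ₂ := by
    rw [Measure.prod_apply_symm uS_mble]
    congr 1
  have hdp : (μ₁.prod μ₂) dS = ∫⁻ y, μ₁ {y} ∂μ₂ := by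
    rw [Measure.prod_apply_symm dS_mble]
    congr 1
  have hpt : ∀ y : ℝ, (μ₁ (Set.Iio y)).toReal + (1 / 2) * (μ₁ {y}).toReal
      = ((μ₁ (Set.Iio y) + (1 / 2 : ℝ≥0∞) * μ₁ {y})).toReal := by
    intro y
    rw [ENNReal.toReal_add (hfin _) (ENNReal.mul_ne_top (by norm_num) (hfin _)),
      ENNReal.toReal_mul]
    norm_num
  rw [relEffect, integral_congr_ae (Filter.Eventually.of_forall hpt),
    integral_toReal (f := fun y => μ₁ (Set.Iio y) + (1 / 2 : ℝ≥0∞) * μ₁ {y})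
      (((measurable_meas_Iio μ₁).add
      ((measurable_meas_singleton μ₁).const_mul _)).aemeasurable)
      (Filter.Eventually.of_forall fun y =>
        ENNReal.add_lt_top.2 ⟨(hfin _).lt_top,
          ENNReal.mul_lt_top (by norm_num) (hfin _).lt_top⟩),
    lintegral_add_left (measurable_meas_Iio μ₁),
    lintegral_const_mul _ (measurable_meas_singleton μ₁), ← hup, ← hdp,
    ENNReal.toReal_add (measure_ne_top _ _)
      (ENNReal.mul_ne_top (by norm_num) (measure_ne_top _ _)), ENNReal.toReal_mul]
  norm_num

lemma relEffect_symm_eq (μ₁ μ₂ : Measure ℝ) [IsProbabilityMeasure μ₁] [IsProbabilityMeasure μ₂] :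
    relEffect μ₂ μ₁ = ((μ₁.prod μ₂) vS).toReal + (1 / 2) * ((μ₁.prod μ₂) dS).toReal := by
  rw [relEffect_eq μ₂ μ₁]
  have h1 : (μ₂.prod μ₁) uS = (μ₁.prod μ₂) vS := by
    rw [← Measure.prod_swap, Measure.map_apply measurable_swap uS_mble]
    congr 1
  have h2 : (μ₂.prod μ₁) dS = (μ₁.prod μ₂) dS := by
    rw [← Measure.prod_swap, Measure.map_apply measurable_swap dS_mble]
    congr 1; ext p; simp [dS, eq_comm]
  rw [h1, h2]
/-- The reshuffling map `((y₁,y₁'),(y₂,y₂')) ↦ ((y₁,y₂),(y₁',y₂'))`. -/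
def tMap (q : (ℝ × ℝ) × (ℝ × ℝ)) : (ℝ × ℝ) × (ℝ × ℝ) :=
  ((q.1.1, q.2.1), (q.1.2, q.2.2))

lemma tMap_mble : Measurable tMap :=
  ((measurable_fst.fst.prodMk measurable_snd.fst)).prodMk
    (measurable_fst.snd.prodMk measurable_snd.snd)

lemma pi_preimage (μ₁ μ₂ : Measure ℝ) [IsProbabilityMeasure μ₁] [IsProbabilityMeasure μ₂]
    {A B : Set (ℝ × ℝ)} (hA : MeasurableSet A) (hB : MeasurableSet B) :
    ((μ₁.prod μ₁).prod (μ₂.prod μ₂)) (tMap ⁻¹' (A ×ˢ B))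
      = (μ₁.prod μ₂) A * (μ₁.prod μ₂) B := by
  rw [Measure.prod_apply (tMap_mble (hA.prod hB))]
  have hsl : ∀ q₁ : ℝ × ℝ, (Prod.mk q₁ ⁻¹' (tMap ⁻¹' (A ×ˢ B)))
      = (Prod.mk q₁.1 ⁻¹' A) ×ˢ (Prod.mk q₁.2 ⁻¹' B) := by
    intro q₁; ext q₂
    simp [tMap, Set.mem_prod]
  simp_rw [hsl, Measure.prod_prod]
  rw [lintegral_prod_mul (measurable_measure_prodMk_left hA).aemeasurable
    (measurable_measure_prodMk_left hB).aemeasurable,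
    ← Measure.prod_apply hA, ← Measure.prod_apply hB]

lemma conc_eq (μ₁ μ₂ : Measure ℝ) [IsProbabilityMeasure μ₁] [IsProbabilityMeasure μ₂] :
    ((μ₁.prod μ₁).prod (μ₂.prod μ₂))
        {q : (ℝ × ℝ) × (ℝ × ℝ) | 0 < (q.1.1 - q.2.1) * (q.1.2 - q.2.2)}
      = (μ₁.prod μ₂) vS * (μ₁.prod μ₂) vS + (μ₁.prod μ₂) uS * (μ₁.prod μ₂) uS := by
  have hset : {q : (ℝ × ℝ) × (ℝ × ℝ) | 0 < (q.1.1 - q.2.1) * (q.1.2 - q.2.2)}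
      = tMap ⁻¹' (vS ×ˢ vS) ∪ tMap ⁻¹' (uS ×ˢ uS) := by
    ext q
    simp only [Set.mem_setOf_eq, Set.mem_union, Set.mem_preimage, Set.mem_prod, tMap,
      uS, vS, mul_pos_iff, sub_pos, sub_neg]
  have hdis : Disjoint (tMap ⁻¹' (vS ×ˢ vS)) (tMap ⁻¹' (uS ×ˢ uS)) := by
    rw [Set.disjoint_left]
    intro q hq hq'
    simp only [Set.mem_preimage, Set.mem_prod, uS, vS, Set.mem_setOf_eq] at hq hq'
    exact lt_asymm hq.1 hq'.1
  rw [hset, measure_union hdis (tMap_mble ((uS_mble.prod uS_mble))),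
    pi_preimage μ₁ μ₂ vS_mble vS_mble, pi_preimage μ₁ μ₂ uS_mble uS_mble]

lemma disc_eq (μ₁ μ₂ : Measure ℝ) [IsProbabilityMeasure μ₁] [IsProbabilityMeasure μ₂] :
    ((μ₁.prod μ₁).prod (μ₂.prod μ₂))
        {q : (ℝ × ℝ) × (ℝ × ℝ) | (q.1.1 - q.2.1) * (q.1.2 - q.2.2) < 0}
      = (μ₁.prod μ₂) vS * (μ₁.prod μ₂) uS + (μ₁.prod μ₂) uS * (μ₁.prod μ₂) vS := by
  have hset : {q : (ℝ × ℝ) × (ℝ × ℝ) | (q.1.1 - q.2.1) * (q.1.2 - q.2.2) < 0}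
      = tMap ⁻¹' (vS ×ˢ uS) ∪ tMap ⁻¹' (uS ×ˢ vS) := by
    ext q
    simp only [Set.mem_setOf_eq, Set.mem_union, Set.mem_preimage, Set.mem_prod, tMap,
      uS, vS, mul_neg_iff, sub_pos, sub_neg]
  have hdis : Disjoint (tMap ⁻¹' (vS ×ˢ uS)) (tMap ⁻¹' (uS ×ˢ vS)) := by
    rw [Set.disjoint_left]
    intro q hq hq'
    simp only [Set.mem_preimage, Set.mem_prod, uS, vS, Set.mem_setOf_eq] at hq hq'
    exact lt_asymm hq.1 hq'.1
  rw [hset, measure_union hdis (tMap_mble ((uS_mble.prod vS_mble))),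
    pi_preimage μ₁ μ₂ vS_mble uS_mble, pi_preimage μ₁ μ₂ uS_mble vS_mble]

/-- pointwise identity: concordance minus discordance equals the squared relative-effect gap. -/
lemma key_pointwise (μ₁ μ₂ : Measure ℝ) [IsProbabilityMeasure μ₁] [IsProbabilityMeasure μ₂] :
    (((μ₁.prod μ₁).prod (μ₂.prod μ₂))
        {q : (ℝ × ℝ) × (ℝ × ℝ) | 0 < (q.1.1 - q.2.1) * (q.1.2 - q.2.2)}).toReal
      - (((μ₁.prod μ₁).prod (μ₂.prod μ₂))
        {q : (ℝ × ℝ) × (ℝ × ℝ) | (q.1.1 - q.2.1) * (q.1.2 - q.2.2) < 0}).toReal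
      = (relEffect μ₁ μ₂ - relEffect μ₂ μ₁) ^ 2 := by
  rw [conc_eq, disc_eq, relEffect_eq, relEffect_symm_eq]
  have hfin : ∀ s : Set (ℝ × ℝ), (μ₁.prod μ₂) s ≠ ⊤ := fun s => measure_ne_top _ _
  rw [ENNReal.toReal_add (ENNReal.mul_ne_top (hfin _) (hfin _)) (ENNReal.mul_ne_top (hfin _) (hfin _)),
    ENNReal.toReal_add (ENNReal.mul_ne_top (hfin _) (hfin _)) (ENNReal.mul_ne_top (hfin _) (hfin _)),
    ENNReal.toReal_mul, ENNReal.toReal_mul, ENNReal.toReal_mul, ENNReal.toReal_mul]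
  ring
lemma measurable_pairProd {E β : Type*} [MeasurableSpace E] [MeasurableSpace β] (κ : Kernel E β)
    [IsSFiniteKernel κ] {s : Set (β × β)} (hs : MeasurableSet s) :
    Measurable fun x : E × E => ((κ x.1).prod (κ x.2)) s := by
  have heq : (fun x : E × E => ((κ x.1).prod (κ x.2)) s)
      = fun x => ((Kernel.prodMkRight E κ ×ₖ Kernel.prodMkLeft E κ) x) s := by
    funext x
    rw [Kernel.prod_apply]
    rfl
  rw [heq]
  exact Kernel.measurable_coe _ hs

lemma prod_bind_apply {E β : Type*} [MeasurableSpace E] (μ : Measure E) [IsProbabilityMeasure μ]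
    [MeasurableSpace β] (κ : Kernel E β) {S : Set (β × β)} [IsMarkovKernel κ]
    (hS : MeasurableSet S) :
    ((μ.bind κ).prod (μ.bind κ)) S
      = ∫⁻ x, ((κ x.1).prod (κ x.2)) S ∂(μ.prod μ) := by
  set ν : Measure β := μ.bind κ with hν
  haveI : IsProbabilityMeasure ν := by
    constructor
    rw [hν, Measure.bind_apply MeasurableSet.univ κ.measurable.aemeasurable]
    simp
  have h1 : (ν.prod ν) S = ∫⁻ q, ν (Prod.mk q ⁻¹' S) ∂ν := Measure.prod_apply hS
  have h2 : ∀ q : β, ν (Prod.mk q ⁻¹' S) = ∫⁻ x₂, κ x₂ (Prod.mk q ⁻¹' S) ∂μ := fun q =>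
    Measure.bind_apply (measurable_prodMk_left hS) κ.measurable.aemeasurable
  -- measurability of the uncurried integrand
  have hunc : Measurable fun r : β × E => κ r.2 (Prod.mk r.1 ⁻¹' S) := by
    have hs' : MeasurableSet {r : (β × E) × β | (r.1.1, r.2) ∈ S} :=
      ((measurable_fst.fst.prodMk measurable_snd) hS)
    have := Kernel.measurable_kernel_prodMk_left (κ := Kernel.prodMkLeft β κ) hs'
    exact this
  have h3 : (ν.prod ν) S = ∫⁻ x₂, ∫⁻ q, κ x₂ (Prod.mk q ⁻¹' S) ∂ν ∂μ := by
    rw [h1]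
    simp_rw [h2]
    exact lintegral_lintegral_swap hunc.aemeasurable
  have h4 : ∀ x₂ : E, ∫⁻ q, κ x₂ (Prod.mk q ⁻¹' S) ∂ν
      = ∫⁻ x₁, ((κ x₁).prod (κ x₂)) S ∂μ := by
    intro x₂
    rw [hν, Measure.lintegral_bind κ.measurable.aemeasurable (measurable_measure_prodMk_left hS).aemeasurable]
    congr 1
    funext x₁
    exact (Measure.prod_apply hS).symm
  rw [h3]
  simp_rw [h4]
  have hswap : AEMeasurable (Function.uncurry fun x₂ x₁ : E => ((κ x₁).prod (κ x₂)) S)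
      (μ.prod μ) := ((measurable_pairProd κ hS).comp measurable_swap).aemeasurable
  rw [lintegral_lintegral_swap hswap, lintegral_prod _ (measurable_pairProd κ hS).aemeasurable]

lemma integrable_of_bounds {α : Type*} [MeasurableSpace α] (μ : Measure α) [IsFiniteMeasure μ]
    {f : α → ℝ} {C : ℝ} (hf : Measurable f) (h0 : ∀ x, 0 ≤ f x) (h1 : ∀ x, f x ≤ C) :
    Integrable f μ :=
  ⟨hf.aestronglyMeasurable, HasFiniteIntegral.of_bounded (C := C)
    (Filter.Eventually.of_forall fun x => by
      rw [Real.norm_eq_abs, abs_of_nonneg (h0 x)]; exact h1 x)⟩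

end ConcAux

open ConcAux in
/-- Concordance representation: `α(X)·Λ(Y|X)` equals the probability of concordance minus
the probability of discordance of two independent copies of the Markov product of `(X, Y)`. -/
theorem alpha_mul_sepCoeff_eq_concordance
    {Ω : Type*} [MeasurableSpace Ω] {p : ℕ} (hp : 1 ≤ p)
    (P : Measure Ω) [IsProbabilityMeasure P]
    (X : Ω → (Fin p → ℝ)) (Y : Ω → ℝ)
    (hX : Measurable X) (hY : Measurable Y)
    (hXnd : ∃ k, Nondegenerate P fun ω => X ω k)
    (hYnd : Nondegenerate P Y) :
    alphaCoeff (P.map X) * sepCoeff P Y X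
      = (((markovProd P Y X).prod (markovProd P Y X))
          {q : (ℝ × ℝ) × (ℝ × ℝ) | 0 < (q.1.1 - q.2.1) * (q.1.2 - q.2.2)}).toReal
      - (((markovProd P Y X).prod (markovProd P Y X))
          {q : (ℝ × ℝ) × (ℝ × ℝ) | (q.1.1 - q.2.1) * (q.1.2 - q.2.2) < 0}).toReal := by
  classical
  obtain ⟨k0, hk0⟩ := hXnd
  set μ : Measure (Fin p → ℝ) := P.map X with hμdef
  haveI : IsProbabilityMeasure μ := Measure.isProbabilityMeasure_map hX.aemeasurable
  -- measurability of the atom function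
  have hmeas_sing : Measurable fun x : Fin p → ℝ => μ {x} := by
    have hdiag : MeasurableSet {q : (Fin p → ℝ) × (Fin p → ℝ) | q.2 = q.1} :=
      measurableSet_eq_fun measurable_snd measurable_fst
    have h := measurable_measure_prodMk_left (ν := μ) hdiag
    have heq : (fun x : Fin p → ℝ => μ {x})
        = fun x : Fin p → ℝ => μ (Prod.mk x ⁻¹' {q : (Fin p → ℝ) × (Fin p → ℝ) | q.2 = q.1}) := by
      funext x; congr 1
    rw [heq]; exact h
  have hle1 : ∀ x : Fin p → ℝ, (μ {x}).toReal ≤ 1 := fun x => by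
    simpa using ENNReal.toReal_mono (by simp) (prob_le_one (μ := μ) (s := {x}))
  -- α(X) ≠ 0
  have halpha : alphaCoeff μ ≠ 0 := by
    rw [alphaCoeff]
    intro h0
    have hI : ∫ x, (μ {x}).toReal ∂μ = 1 := by linarith [sub_eq_zero.mp h0]
    have hint : Integrable (fun x => (μ {x}).toReal) μ :=
      integrable_of_bounds μ hmeas_sing.ennreal_toReal (fun _ => ENNReal.toReal_nonneg) hle1
    have hzero : ∫ x, (1 - (μ {x}).toReal) ∂μ = 0 := by
      rw [integral_sub (integrable_const 1) hint, integral_const]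
      simp [hI]
    have hae : (fun x => 1 - (μ {x}).toReal) =ᵐ[μ] 0 :=
      (integral_eq_zero_iff_of_nonneg_ae
        (Filter.Eventually.of_forall fun x => sub_nonneg.2 (hle1 x))
        ((integrable_const 1).sub hint)).mp hzero
    haveI : (ae μ).NeBot := ae_neBot.2 (IsProbabilityMeasure.ne_zero (μ := μ))
    obtain ⟨x₀, hx₀⟩ := hae.exists
    have hx1 : μ {x₀} = 1 := by
      have h1 : (μ {x₀}).toReal = 1 := by
        have := hx₀
        simp only [Pi.zero_apply] at this
        linarith
      exact (ENNReal.toReal_eq_one_iff _).mp h1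
    have hcompl : μ ({x₀}ᶜ) = 0 := by
      rw [measure_compl (measurableSet_singleton x₀) (measure_ne_top _ _), hx1]
      simp
    have hPae : ∀ᵐ ω ∂P, X ω = x₀ := by
      have hpre : P (X ⁻¹' {x₀}ᶜ) = 0 := by
        rw [← Measure.map_apply hX (measurableSet_singleton x₀).compl]
        exact hcompl
      have : ∀ᵐ ω ∂P, X ω ∈ ({x₀} : Set (Fin p → ℝ)) := by
        rw [ae_iff]
        convert hpre using 2
        rfl
      exact this.mono fun ω h => h
    exact hk0 ⟨x₀ k0, hPae.mono fun ω h => congrFun h k0⟩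
  -- the conditional distribution kernel and its pair product
  set κ : Kernel (Fin p → ℝ) ℝ := condDistrib Y X P with hκdef
  haveI : IsMarkovKernel κ := by rw [hκdef]; infer_instance
  set k : Kernel (Fin p → ℝ) (ℝ × ℝ) := κ ×ₖ κ with hkdef
  have hmp : markovProd P Y X = μ.bind k := by
    rw [markovProd]
    congr 1
    funext x
    rw [hkdef, Kernel.prod_apply]
  -- measurable sets of concordance / discordance
  have hmul : Measurable fun q : (ℝ × ℝ) × (ℝ × ℝ) => (q.1.1 - q.2.1) * (q.1.2 - q.2.2) :=
    (measurable_fst.fst.sub measurable_snd.fst).mul (measurable_fst.snd.sub measurable_snd.snd)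
  have hSp : MeasurableSet {q : (ℝ × ℝ) × (ℝ × ℝ) | 0 < (q.1.1 - q.2.1) * (q.1.2 - q.2.2)} :=
    measurableSet_lt measurable_const hmul
  have hSm : MeasurableSet {q : (ℝ × ℝ) × (ℝ × ℝ) | (q.1.1 - q.2.1) * (q.1.2 - q.2.2) < 0} :=
    measurableSet_lt hmul measurable_const
  -- real-valued pairwise probabilities
  set aR : ((Fin p → ℝ) × (Fin p → ℝ)) → ℝ := fun x => (((κ x.1).prod (κ x.2)) uS).toReal
    with haRdef
  set bR : ((Fin p → ℝ) × (Fin p → ℝ)) → ℝ := fun x => (((κ x.1).prod (κ x.2)) vS).toReal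
    with hbRdef
  have haM : Measurable aR := (measurable_pairProd κ uS_mble).ennreal_toReal
  have hbM : Measurable bR := (measurable_pairProd κ vS_mble).ennreal_toReal
  have ha01 : ∀ x, 0 ≤ aR x ∧ aR x ≤ 1 := fun x =>
    ⟨ENNReal.toReal_nonneg, by
      simpa using ENNReal.toReal_mono (by simp) (prob_le_one (μ := (κ x.1).prod (κ x.2)) (s := uS))⟩
  have hb01 : ∀ x, 0 ≤ bR x ∧ bR x ≤ 1 := fun x =>
    ⟨ENNReal.toReal_nonneg, by
      simpa using ENNReal.toReal_mono (by simp) (prob_le_one (μ := (κ x.1).prod (κ x.2)) (s := vS))⟩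
  -- concordance probability as an integral
  have hfin : ∀ (x : (Fin p → ℝ) × (Fin p → ℝ)) (s : Set (ℝ × ℝ)),
      ((κ x.1).prod (κ x.2)) s ≠ ⊤ := fun x s => measure_ne_top _ _
  have hconc : (((μ.bind k).prod (μ.bind k))
        {q : (ℝ × ℝ) × (ℝ × ℝ) | 0 < (q.1.1 - q.2.1) * (q.1.2 - q.2.2)}).toReal
      = ∫ x, (bR x ^ 2 + aR x ^ 2) ∂(μ.prod μ) := by
    rw [prod_bind_apply μ k hSp]
    have h1 : ∀ x : (Fin p → ℝ) × (Fin p → ℝ),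
        ((k x.1).prod (k x.2)) {q : (ℝ × ℝ) × (ℝ × ℝ) | 0 < (q.1.1 - q.2.1) * (q.1.2 - q.2.2)}
          = ((κ x.1).prod (κ x.2)) vS * ((κ x.1).prod (κ x.2)) vS
            + ((κ x.1).prod (κ x.2)) uS * ((κ x.1).prod (κ x.2)) uS := by
      intro x
      rw [hkdef]
      simp only [Kernel.prod_apply]
      exact conc_eq (κ x.1) (κ x.2)
    simp_rw [h1]
    rw [← integral_toReal (f := fun x => ((κ x.1).prod (κ x.2)) vS * ((κ x.1).prod (κ x.2)) vS
        + ((κ x.1).prod (κ x.2)) uS * ((κ x.1).prod (κ x.2)) uS)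
      (((measurable_pairProd κ vS_mble).mul (measurable_pairProd κ vS_mble)).add
        ((measurable_pairProd κ uS_mble).mul (measurable_pairProd κ uS_mble))).aemeasurable
      (Filter.Eventually.of_forall fun x => ENNReal.add_lt_top.2
        ⟨ENNReal.mul_lt_top (hfin x vS).lt_top (hfin x vS).lt_top,
         ENNReal.mul_lt_top (hfin x uS).lt_top (hfin x uS).lt_top⟩)]
    refine integral_congr_ae (Filter.Eventually.of_forall fun x => ?_)
    dsimp only
    rw [ENNReal.toReal_add (ENNReal.mul_ne_top (hfin x vS) (hfin x vS))
        (ENNReal.mul_ne_top (hfin x uS) (hfin x uS)),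
      ENNReal.toReal_mul, ENNReal.toReal_mul]
    simp [haRdef, hbRdef, sq]
  -- discordance probability as an integral
  have hdisc : (((μ.bind k).prod (μ.bind k))
        {q : (ℝ × ℝ) × (ℝ × ℝ) | (q.1.1 - q.2.1) * (q.1.2 - q.2.2) < 0}).toReal
      = ∫ x, (bR x * aR x + aR x * bR x) ∂(μ.prod μ) := by
    rw [prod_bind_apply μ k hSm]
    have h1 : ∀ x : (Fin p → ℝ) × (Fin p → ℝ),
        ((k x.1).prod (k x.2)) {q : (ℝ × ℝ) × (ℝ × ℝ) | (q.1.1 - q.2.1) * (q.1.2 - q.2.2) < 0}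
          = ((κ x.1).prod (κ x.2)) vS * ((κ x.1).prod (κ x.2)) uS
            + ((κ x.1).prod (κ x.2)) uS * ((κ x.1).prod (κ x.2)) vS := by
      intro x
      rw [hkdef]
      simp only [Kernel.prod_apply]
      exact disc_eq (κ x.1) (κ x.2)
    simp_rw [h1]
    rw [← integral_toReal (f := fun x => ((κ x.1).prod (κ x.2)) vS * ((κ x.1).prod (κ x.2)) uS
        + ((κ x.1).prod (κ x.2)) uS * ((κ x.1).prod (κ x.2)) vS)
      (((measurable_pairProd κ vS_mble).mul (measurable_pairProd κ uS_mble)).add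
        ((measurable_pairProd κ uS_mble).mul (measurable_pairProd κ vS_mble))).aemeasurable
      (Filter.Eventually.of_forall fun x => ENNReal.add_lt_top.2
        ⟨ENNReal.mul_lt_top (hfin x vS).lt_top (hfin x uS).lt_top,
         ENNReal.mul_lt_top (hfin x uS).lt_top (hfin x vS).lt_top⟩)]
    refine integral_congr_ae (Filter.Eventually.of_forall fun x => ?_)
    dsimp only
    rw [ENNReal.toReal_add (ENNReal.mul_ne_top (hfin x vS) (hfin x uS))
        (ENNReal.mul_ne_top (hfin x uS) (hfin x vS)),
      ENNReal.toReal_mul, ENNReal.toReal_mul]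
  -- integrability
  have hint1 : Integrable (fun x => bR x ^ 2 + aR x ^ 2) (μ.prod μ) :=
    integrable_of_bounds (C := 2) _ ((hbM.pow_const 2).add (haM.pow_const 2))
      (fun x => add_nonneg (sq_nonneg _) (sq_nonneg _))
      (fun x => by
        have ha := ha01 x; have hb := hb01 x
        nlinarith [ha.1, ha.2, hb.1, hb.2])
  have hint2 : Integrable (fun x => bR x * aR x + aR x * bR x) (μ.prod μ) :=
    integrable_of_bounds (C := 2) _ ((hbM.mul haM).add (haM.mul hbM))
      (fun x => add_nonneg (mul_nonneg (hb01 x).1 (ha01 x).1) (mul_nonneg (ha01 x).1 (hb01 x).1))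
      (fun x => by
        have ha := ha01 x; have hb := hb01 x
        nlinarith [ha.1, ha.2, hb.1, hb.2])
  -- put everything together
  rw [sepCoeff, ← mul_assoc, mul_inv_cancel₀ halpha, one_mul, hmp, hconc, hdisc,
    ← integral_sub hint1 hint2]
  refine integral_congr_ae (Filter.Eventually.of_forall fun x => ?_)
  dsimp only
  rw [← hκdef, relEffect_eq (κ x.1) (κ x.2), relEffect_symm_eq (κ x.1) (κ x.2)]
  simp only [haRdef, hbRdef]
  ring
end

section
/- Data processing inequality and self-equitability: let h : ℝ^p → ℝ^q be Borel measurable with α(h(X)) = α(X). Then (i) Λ(Y | h∘X) ≤ Λ(Y|X); and (ii) if in addition Y and X are conditionally independent given h(X), then Λ(Y | h∘X) = Λ(Y|X). -/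
open MeasureTheory ProbabilityTheory Set Filter Topology

namespace SepAux

lemma alphaCoeff_nonneg {E : Type*} [MeasurableSpace E] (μ : Measure E)
    [IsProbabilityMeasure μ] : 0 ≤ alphaCoeff μ := by
  have hle : ∫ x, (μ {x}).toReal ∂μ ≤ 1 := by
    by_cases hi : Integrable (fun x => (μ {x}).toReal) μ
    · calc ∫ x, (μ {x}).toReal ∂μ ≤ ∫ _x, (1 : ℝ) ∂μ := by
            refine integral_mono hi (integrable_const 1) fun x => ?_
            exact ENNReal.toReal_le_of_le_ofReal zero_le_one (by simpa using prob_le_one)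
        _ = 1 := by simp [measure_univ]
    · rw [integral_undef hi]; norm_num
  unfold alphaCoeff
  linarith

lemma meas_ext_rat (μ ν : Measure ℝ) [IsProbabilityMeasure μ] [IsProbabilityMeasure ν]
    (hIio : ∀ q : ℚ, μ (Iio (q : ℝ)) = ν (Iio (q : ℝ))) : μ = ν := by
  refine MeasureTheory.ext_of_generate_finite (⋃ a : ℚ, {Iio (a : ℝ)})
    ((BorelSpace.measurable_eq (α := ℝ)).trans Real.borel_eq_generateFrom_Iio_rat)
    Real.isPiSystem_Iio_rat ?_ (by simp)
  rintro s hs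
  simp only [mem_iUnion, mem_singleton_iff] at hs
  obtain ⟨q, rfl⟩ := hs
  exact hIio q

/-- sign kernel -/
noncomputable def sgn2 (a b : ℝ) : ℝ := if a < b then 1 else if b < a then -1 else 0

lemma measurable_sgn2 : Measurable fun p : ℝ × ℝ => sgn2 p.1 p.2 := by
  unfold sgn2
  exact Measurable.ite (measurableSet_lt measurable_fst measurable_snd) measurable_const
    (Measurable.ite (measurableSet_lt measurable_snd measurable_fst) measurable_const
      measurable_const)

lemma abs_sgn2_le (a b : ℝ) : |sgn2 a b| ≤ 1 := by
  unfold sgn2; split_ifs <;> norm_num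

lemma sgn2_swap (a b : ℝ) : sgn2 b a = - sgn2 a b := by
  unfold sgn2
  rcases lt_trichotomy a b with h | h | h
  · simp [h, not_lt_of_gt h]
  · simp [h]
  · simp [h, not_lt_of_gt h]

lemma integrable_of_abs_le {α : Type*} [MeasurableSpace α] {μ : Measure α} [IsFiniteMeasure μ]
    {f : α → ℝ} (hm : AEStronglyMeasurable f μ) {C : ℝ} (hb : ∀ x, |f x| ≤ C) :
    Integrable f μ :=
  ⟨hm, HasFiniteIntegral.of_bounded (C := C)
    (Eventually.of_forall fun x => by simpa [Real.norm_eq_abs] using hb x)⟩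

lemma abs_integral_le {α : Type*} [MeasurableSpace α] {μ : Measure α} [IsProbabilityMeasure μ]
    {f : α → ℝ} {C : ℝ} (hb : ∀ x, |f x| ≤ C) : |∫ x, f x ∂μ| ≤ C := by
  have := norm_integral_le_of_norm_le_const (μ := μ) (f := f) (C := C)
    (Eventually.of_forall fun x => by simpa [Real.norm_eq_abs] using hb x)
  simpa [Real.norm_eq_abs, measure_univ] using this

lemma toReal_Iio_mono (μ : Measure ℝ) [IsFiniteMeasure μ] :
    Monotone fun b => (μ (Iio b)).toReal := fun b c hbc =>
  ENNReal.toReal_mono (measure_ne_top _ _) (measure_mono (Iio_subset_Iio hbc))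

lemma toReal_Iic_mono (μ : Measure ℝ) [IsFiniteMeasure μ] :
    Monotone fun b => (μ (Iic b)).toReal := fun b c hbc =>
  ENNReal.toReal_mono (measure_ne_top _ _) (measure_mono (Iic_subset_Iic.mpr hbc))

lemma integrable_toReal_Iio (μ ν : Measure ℝ) [IsProbabilityMeasure μ] [IsProbabilityMeasure ν] :
    Integrable (fun b => (μ (Iio b)).toReal) ν := by
  refine integrable_of_abs_le ((toReal_Iio_mono μ).measurable).aestronglyMeasurable (C := 1) ?_
  intro b
  rw [abs_of_nonneg ENNReal.toReal_nonneg]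
  exact ENNReal.toReal_le_of_le_ofReal zero_le_one (by simpa using prob_le_one)

lemma integrable_toReal_Iic (μ ν : Measure ℝ) [IsProbabilityMeasure μ] [IsProbabilityMeasure ν] :
    Integrable (fun b => (μ (Iic b)).toReal) ν := by
  refine integrable_of_abs_le ((toReal_Iic_mono μ).measurable).aestronglyMeasurable (C := 1) ?_
  intro b
  rw [abs_of_nonneg ENNReal.toReal_nonneg]
  exact ENNReal.toReal_le_of_le_ofReal zero_le_one (by simpa using prob_le_one)

lemma measure_Iic_split (μ : Measure ℝ) [IsFiniteMeasure μ] (b : ℝ) :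
    (μ (Iic b)).toReal = (μ (Iio b)).toReal + (μ {b}).toReal := by
  have h : μ (Iic b) = μ (Iio b) + μ {b} := by
    rw [← Iio_union_right]
    exact measure_union (by simp) (measurableSet_singleton b)
  rw [h, ENNReal.toReal_add (measure_ne_top _ _) (measure_ne_top _ _)]

lemma measure_Ioi_toReal (μ : Measure ℝ) [IsProbabilityMeasure μ] (b : ℝ) :
    (μ (Ioi b)).toReal = 1 - (μ (Iic b)).toReal := by
  have h : μ (Iic b) + μ (Ioi b) = 1 := by
    rw [← compl_Iic, measure_add_measure_compl measurableSet_Iic, measure_univ]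
  have h' := congrArg ENNReal.toReal h
  rw [ENNReal.toReal_add (measure_ne_top _ _) (measure_ne_top _ _), ENNReal.toReal_one] at h'
  linarith

lemma integral_sgn2_left (μ : Measure ℝ) [IsProbabilityMeasure μ] (b : ℝ) :
    ∫ a, sgn2 a b ∂μ = (μ (Iio b)).toReal + (μ (Iic b)).toReal - 1 := by
  have hfun : (fun a => sgn2 a b) = fun a =>
      (Iio b).indicator (fun _ => (1 : ℝ)) a - (Ioi b).indicator (fun _ => (1 : ℝ)) a := by
    funext a
    unfold sgn2
    rcases lt_trichotomy a b with h | h | h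
    · simp [Set.indicator_apply, h, not_lt_of_gt h]
    · simp [Set.indicator_apply, h]
    · simp [Set.indicator_apply, h, not_lt_of_gt h]
  rw [hfun, integral_sub ((integrable_const (1 : ℝ)).indicator measurableSet_Iio)
    ((integrable_const (1 : ℝ)).indicator measurableSet_Ioi),
    integral_indicator_const _ measurableSet_Iio, integral_indicator_const _ measurableSet_Ioi,
    smul_eq_mul, smul_eq_mul, mul_one, mul_one, measureReal_def, measureReal_def,
    measure_Ioi_toReal]
  ring

lemma integral_integral_sgn2 (μ ν : Measure ℝ) [IsProbabilityMeasure μ] [IsProbabilityMeasure ν] :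
    ∫ b, ∫ a, sgn2 a b ∂μ ∂ν = 2 * relEffect μ ν - 1 := by
  have h2 : ∀ b, ∫ a, sgn2 a b ∂μ = (μ (Iio b)).toReal + (μ (Iic b)).toReal - 1 :=
    integral_sgn2_left μ
  have h1 : ∀ y : ℝ, (μ (Set.Iio y)).toReal + (1 / 2) * (μ {y}).toReal
      = (1 / 2) * ((μ (Iio y)).toReal + (μ (Iic y)).toReal) := by
    intro y
    rw [measure_Iic_split]
    ring
  have hf := integrable_toReal_Iio μ ν
  have hg := integrable_toReal_Iic μ ν
  have hL : ∫ b, ∫ a, sgn2 a b ∂μ ∂ν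
      = (∫ b, (μ (Iio b)).toReal ∂ν) + (∫ b, (μ (Iic b)).toReal ∂ν) - 1 := by
    simp only [h2]
    have h3 : ∫ b, ((μ (Iio b)).toReal + (μ (Iic b)).toReal - 1) ∂ν
        = (∫ b, ((μ (Iio b)).toReal + (μ (Iic b)).toReal) ∂ν) - ∫ _b, (1 : ℝ) ∂ν :=
      integral_sub (hf.add hg) (integrable_const 1)
    rw [h3, integral_add hf hg, integral_const]
    simp [measure_univ]
  have hR : relEffect μ ν
      = (1 / 2) * ((∫ b, (μ (Iio b)).toReal ∂ν) + (∫ b, (μ (Iic b)).toReal ∂ν)) := by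
    unfold relEffect
    simp only [h1]
    rw [integral_const_mul, integral_add hf hg]
  rw [hL, hR]
  ring

lemma relEffect_sub (μ ν : Measure ℝ) [IsProbabilityMeasure μ] [IsProbabilityMeasure ν] :
    relEffect μ ν - relEffect ν μ = ∫ b, ∫ a, sgn2 a b ∂μ ∂ν := by
  have hI := integral_integral_sgn2 μ ν
  have hJ := integral_integral_sgn2 ν μ
  have hswap : ∫ a, ∫ b, sgn2 b a ∂ν ∂μ = ∫ b, ∫ a, sgn2 b a ∂μ ∂ν := by
    refine integral_integral_swap (f := fun a b => sgn2 b a) ?_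
    refine integrable_of_abs_le ?_ (C := 1) ?_
    · exact (measurable_sgn2.comp (measurable_snd.prodMk measurable_fst)).aestronglyMeasurable
    · intro x; exact abs_sgn2_le _ _
  have hneg0 : ∀ b, ∫ a, sgn2 b a ∂μ = - ∫ a, sgn2 a b ∂μ := fun b => by
    rw [← integral_neg]
    exact integral_congr_ae (Eventually.of_forall fun a => sgn2_swap a b)
  have hneg : ∫ b, ∫ a, sgn2 b a ∂μ ∂ν = - ∫ b, ∫ a, sgn2 a b ∂μ ∂ν := by
    rw [← integral_neg]
    exact integral_congr_ae (Eventually.of_forall fun b => hneg0 b)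
  have := (hJ.symm.trans hswap).trans hneg
  linarith


/-- The antisymmetric part of the relative effect, as a double kernel integral. -/
noncomputable def Dk {F : Type*} [MeasurableSpace F] (κ : Kernel F ℝ) (z : F × F) : ℝ :=
  ∫ b, ∫ a, sgn2 a b ∂(κ z.1) ∂(κ z.2)

lemma stronglyMeasurable_inner {F : Type*} [MeasurableSpace F] (κ : Kernel F ℝ)
    [IsSFiniteKernel κ] :
    StronglyMeasurable fun q : F × ℝ => ∫ a, sgn2 a q.2 ∂(κ q.1) := by
  have h := MeasureTheory.StronglyMeasurable.integral_kernel_prod_right'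
    (κ := κ.comap (Prod.fst : F × ℝ → F) measurable_fst)
    (f := fun p : (F × ℝ) × ℝ => sgn2 p.2 p.1.2)
    ((measurable_sgn2.comp (measurable_snd.prodMk
      (measurable_snd.comp measurable_fst))).stronglyMeasurable)
  exact h

lemma stronglyMeasurable_Dk {F : Type*} [MeasurableSpace F] (κ : Kernel F ℝ)
    [IsSFiniteKernel κ] : StronglyMeasurable (Dk κ) := by
  have h := MeasureTheory.StronglyMeasurable.integral_kernel_prod_right'
    (κ := κ.comap (Prod.snd : F × F → F) measurable_snd)
    (f := fun p : (F × F) × ℝ => ∫ a, sgn2 a p.2 ∂(κ p.1.1))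
    ((stronglyMeasurable_inner κ).comp_measurable
      ((measurable_fst.comp measurable_fst).prodMk measurable_snd))
  exact h

lemma abs_Dk_le {F : Type*} [MeasurableSpace F] (κ : Kernel F ℝ) [IsMarkovKernel κ] (z : F × F) :
    |Dk κ z| ≤ 1 := by
  refine abs_integral_le fun b => ?_
  exact abs_integral_le fun a => abs_sgn2_le a b


lemma abs_mul_le_one {x y : ℝ} (hx : |x| ≤ 1) (hy : |y| ≤ 1) : |x * y| ≤ 1 := by
  rw [abs_mul]
  nlinarith [abs_nonneg x, abs_nonneg y]

section Transfer

variable {Ω : Type*} [MeasurableSpace Ω] [StandardBorelSpace Ω] [Nonempty Ω]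

lemma compProd_condDistrib {F : Type*} [MeasurableSpace F]
    (P : Measure Ω) [IsProbabilityMeasure P] {Y : Ω → ℝ} (hY : Measurable Y)
    (W : Ω → F) :
    (P.map W) ⊗ₘ condDistrib Y W P = P.map (fun ω => (W ω, Y ω)) := by
  rw [condDistrib, ← Measure.fst_map_prodMk₀ (X := W) hY.aemeasurable,
    Measure.disintegrate]

lemma integral_mul_Dk {F : Type*} [MeasurableSpace F]
    (P : Measure Ω) [IsProbabilityMeasure P] {Y : Ω → ℝ} (hY : Measurable Y)
    {W : Ω → F} (hW : Measurable W) {φ : F × F → ℝ} (hφm : Measurable φ)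
    (hφb : ∀ z, |φ z| ≤ 1) :
    ∫ z, φ z * Dk (condDistrib Y W P) z ∂((P.map W).prod (P.map W)) =
      ∫ ω : Ω × Ω, φ (W ω.1, W ω.2) * sgn2 (Y ω.1) (Y ω.2) ∂(P.prod P) := by
  set κ := condDistrib Y W P with hκdef
  haveI : IsProbabilityMeasure (P.map W) := Measure.isProbabilityMeasure_map hW.aemeasurable
  set μ := P.map W with hμdef
  haveI : IsProbabilityMeasure (P.map fun ω => (W ω, Y ω)) :=
    Measure.isProbabilityMeasure_map (hW.prodMk hY).aemeasurable
  set ρ := P.map (fun ω => (W ω, Y ω)) with hρdef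
  have hρ : μ ⊗ₘ κ = ρ := compProd_condDistrib P hY W
  set Ψ : (F × ℝ) × (F × ℝ) → ℝ := fun p => φ (p.1.1, p.2.1) * sgn2 p.1.2 p.2.2 with hΨdef
  have hΨm : Measurable Ψ :=
    (hφm.comp ((measurable_fst.comp measurable_fst).prodMk
      (measurable_fst.comp measurable_snd))).mul
      (measurable_sgn2.comp ((measurable_snd.comp measurable_fst).prodMk
        (measurable_snd.comp measurable_snd)))
  have hΨb : ∀ p, |Ψ p| ≤ 1 := fun p => abs_mul_le_one (hφb _) (abs_sgn2_le _ _)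
  have hmapT : ρ.prod ρ = (P.prod P).map
      (Prod.map (fun ω => (W ω, Y ω)) (fun ω => (W ω, Y ω))) :=
    Measure.map_prod_map _ _ (hW.prodMk hY) (hW.prodMk hY)
  have hR : ∫ ω : Ω × Ω, φ (W ω.1, W ω.2) * sgn2 (Y ω.1) (Y ω.2) ∂(P.prod P)
      = ∫ p, Ψ p ∂(ρ.prod ρ) := by
    rw [hmapT, integral_map ((hW.prodMk hY).prodMap (hW.prodMk hY)).aemeasurable
      hΨm.aestronglyMeasurable]
    rfl
  have hIntΨ : Integrable Ψ (ρ.prod ρ) := integrable_of_abs_le hΨm.aestronglyMeasurable hΨb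
  set G : F × ℝ → ℝ := fun p1 => ∫ p2, Ψ (p1, p2) ∂ρ with hGdef
  have hGm : StronglyMeasurable G := hΨm.stronglyMeasurable.integral_prod_right'
  have hGb : ∀ p1, |G p1| ≤ 1 := fun p1 => abs_integral_le fun p2 => hΨb _
  have c1 : ∫ p, Ψ p ∂(ρ.prod ρ) = ∫ p1, G p1 ∂ρ := integral_prod Ψ hIntΨ
  have hIntG : Integrable G (μ ⊗ₘ κ) := by
    rw [hρ]; exact integrable_of_abs_le hGm.aestronglyMeasurable hGb
  have c2 : ∫ p1, G p1 ∂ρ = ∫ x1, ∫ a, G (x1, a) ∂(κ x1) ∂μ := by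
    rw [← hρ]; exact Measure.integral_compProd hIntG
  have hinner : ∀ x1 : F, ∫ a, G (x1, a) ∂(κ x1)
      = ∫ x2, φ (x1, x2) * Dk κ (x1, x2) ∂μ := by
    intro x1
    have hswap : ∫ a, G (x1, a) ∂(κ x1)
        = ∫ p2, ∫ a, Ψ ((x1, a), p2) ∂(κ x1) ∂ρ := by
      refine integral_integral_swap (f := fun a p2 => Ψ ((x1, a), p2)) ?_
      refine integrable_of_abs_le ?_ (C := (1 : ℝ)) (fun q => hΨb _)
      exact (hΨm.comp ((measurable_const.prodMk measurable_fst).prodMk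
        measurable_snd)).aestronglyMeasurable
    have hpull : ∀ p2 : F × ℝ, ∫ a, Ψ ((x1, a), p2) ∂(κ x1)
        = φ (x1, p2.1) * ∫ a, sgn2 a p2.2 ∂(κ x1) := fun p2 => by
      show ∫ a, φ (x1, p2.1) * sgn2 a p2.2 ∂(κ x1) = _
      exact integral_const_mul _ _
    have hsmI : StronglyMeasurable fun y : ℝ => ∫ a, sgn2 a y ∂(κ x1) :=
      StronglyMeasurable.integral_prod_right' (ν := κ x1)
        (f := fun q : ℝ × ℝ => sgn2 q.2 q.1)
        (measurable_sgn2.comp (measurable_snd.prodMk measurable_fst)).stronglyMeasurable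
    have hmid : StronglyMeasurable fun p2 : F × ℝ =>
        φ (x1, p2.1) * ∫ a, sgn2 a p2.2 ∂(κ x1) :=
      ((hφm.comp (measurable_const.prodMk measurable_fst)).stronglyMeasurable).mul
        (hsmI.comp_measurable measurable_snd)
    have hmidb : ∀ p2 : F × ℝ, |φ (x1, p2.1) * ∫ a, sgn2 a p2.2 ∂(κ x1)| ≤ 1 := fun p2 =>
      abs_mul_le_one (hφb _) (abs_integral_le fun a => abs_sgn2_le _ _)
    have hIntmid : Integrable (fun p2 : F × ℝ =>
        φ (x1, p2.1) * ∫ a, sgn2 a p2.2 ∂(κ x1)) (μ ⊗ₘ κ) := by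
      rw [hρ]; exact integrable_of_abs_le hmid.aestronglyMeasurable hmidb
    calc ∫ a, G (x1, a) ∂(κ x1) = ∫ p2, ∫ a, Ψ ((x1, a), p2) ∂(κ x1) ∂ρ := hswap
      _ = ∫ p2, φ (x1, p2.1) * ∫ a, sgn2 a p2.2 ∂(κ x1) ∂ρ :=
          integral_congr_ae (Eventually.of_forall hpull)
      _ = ∫ x2, ∫ b, φ (x1, x2) * ∫ a, sgn2 a b ∂(κ x1) ∂(κ x2) ∂μ := by
          rw [← hρ]; exact Measure.integral_compProd hIntmid
      _ = ∫ x2, φ (x1, x2) * Dk κ (x1, x2) ∂μ :=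
          integral_congr_ae (Eventually.of_forall fun x2 => integral_const_mul _ _)
  have hIntfD : Integrable (fun z : F × F => φ z * Dk κ z) (μ.prod μ) := by
    refine integrable_of_abs_le ?_ (C := (1 : ℝ))
      (fun z => abs_mul_le_one (hφb _) (abs_Dk_le κ z))
    exact (hφm.mul (stronglyMeasurable_Dk κ).measurable).aestronglyMeasurable
  have c3 : ∫ z, φ z * Dk κ z ∂(μ.prod μ)
      = ∫ x1, ∫ x2, φ (x1, x2) * Dk κ (x1, x2) ∂μ ∂μ := integral_prod _ hIntfD
  rw [hR, c1, c2, c3]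
  exact (integral_congr_ae (Eventually.of_forall fun x1 => (hinner x1).symm))


lemma condexp_indicator_comap_eq {β γ : Type*} [MeasurableSpace β] [MeasurableSpace γ]
    (P : Measure Ω) [IsProbabilityMeasure P] {Y : Ω → ℝ} (hY : Measurable Y)
    {X : Ω → β} (hX : Measurable X) {h : β → γ} (hh : Measurable h)
    (hci : CondIndepFun (MeasurableSpace.comap (h ∘ X) inferInstance)
      ((hh.comp hX).comap_le) Y X P)
    {B : Set ℝ} (hB : MeasurableSet B) :
    (P⟦Y ⁻¹' B | MeasurableSpace.comap X inferInstance⟧)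
      =ᵐ[P] (P⟦Y ⁻¹' B | MeasurableSpace.comap (h ∘ X) inferInstance⟧) := by
  have hm'le : MeasurableSpace.comap (h ∘ X) inferInstance ≤ ‹MeasurableSpace Ω› :=
    (hh.comp hX).comap_le
  have hm'leX : MeasurableSpace.comap (h ∘ X) inferInstance
      ≤ MeasurableSpace.comap X inferInstance := by
    rintro s ⟨t, ht, rfl⟩
    exact ⟨h ⁻¹' t, hh ht, (Set.preimage_comp).symm⟩
  have hfInt : Integrable ((Y ⁻¹' B).indicator fun _ => (1 : ℝ)) P :=
    (integrable_const 1).indicator (hY hB)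
  have hgb : ∀ᵐ ω ∂P, ‖(P⟦Y ⁻¹' B | MeasurableSpace.comap (h ∘ X) inferInstance⟧) ω‖ ≤ (1 : ℝ) := by
    have hb : ∀ᵐ ω ∂P, |(Y ⁻¹' B).indicator (fun _ => (1 : ℝ)) ω| ≤ ((1 : NNReal) : ℝ) := by
      refine Eventually.of_forall fun ω => ?_
      by_cases hω : ω ∈ Y ⁻¹' B <;> simp [Set.indicator_apply, hω]
    filter_upwards [ae_bdd_condExp_of_ae_bdd
      (m := MeasurableSpace.comap (h ∘ X) inferInstance) hb] with ω hω
    simpa [Real.norm_eq_abs] using hω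
  refine (ae_eq_condExp_of_forall_setIntegral_eq hX.comap_le hfInt
    (fun s _ _ => integrable_condExp.integrableOn) ?_
    ((stronglyMeasurable_condExp.mono hm'leX).aestronglyMeasurable)).symm
  rintro s ⟨S, hS, rfl⟩ -
  have hsX : MeasurableSet (X ⁻¹' S) := hX hS
  have hind : Integrable ((X ⁻¹' S).indicator fun _ => (1 : ℝ)) P :=
    (integrable_const 1).indicator hsX
  have pull := condExp_stronglyMeasurable_mul_of_bound hm'le
    (stronglyMeasurable_condExp (f := (Y ⁻¹' B).indicator fun _ => (1 : ℝ))
      (m := MeasurableSpace.comap (h ∘ X) inferInstance))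
    hind 1 hgb
  have hLHS : ∫ x in X ⁻¹' S, (P⟦Y ⁻¹' B | MeasurableSpace.comap (h ∘ X) inferInstance⟧) x ∂P
      = ∫ x, ((P⟦Y ⁻¹' B | MeasurableSpace.comap (h ∘ X) inferInstance⟧)
          * fun ω => (X ⁻¹' S).indicator (fun _ => (1 : ℝ)) ω) x ∂P := by
    rw [← integral_indicator hsX]
    refine integral_congr_ae (Eventually.of_forall fun x => ?_)
    by_cases hx : x ∈ X ⁻¹' S <;> simp [Set.indicator_apply, hx]
  have hRHS : ∫ x in X ⁻¹' S, (Y ⁻¹' B).indicator (fun _ => (1 : ℝ)) x ∂P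
      = ∫ x, (Y ⁻¹' B ∩ X ⁻¹' S).indicator (fun _ => (1 : ℝ)) x ∂P := by
    rw [← integral_indicator hsX]
    refine integral_congr_ae (Eventually.of_forall fun x => ?_)
    by_cases hx : x ∈ X ⁻¹' S <;> by_cases hy : x ∈ Y ⁻¹' B <;>
      simp [Set.indicator_apply, hx, hy]
  have hci' := (condIndepFun_iff_condExp_inter_preimage_eq_mul
    (m' := MeasurableSpace.comap (h ∘ X) inferInstance) hY hX).mp hci B S hB hS
  rw [hLHS, hRHS]
  calc ∫ x, ((P⟦Y ⁻¹' B | MeasurableSpace.comap (h ∘ X) inferInstance⟧)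
          * fun ω => (X ⁻¹' S).indicator (fun _ => (1 : ℝ)) ω) x ∂P
      = ∫ x, (P[(P⟦Y ⁻¹' B | MeasurableSpace.comap (h ∘ X) inferInstance⟧)
          * fun ω => (X ⁻¹' S).indicator (fun _ => (1 : ℝ)) ω
          | MeasurableSpace.comap (h ∘ X) inferInstance]) x ∂P :=
        (integral_condExp hm'le).symm
    _ = ∫ x, ((P⟦Y ⁻¹' B | MeasurableSpace.comap (h ∘ X) inferInstance⟧)
          * (P⟦X ⁻¹' S | MeasurableSpace.comap (h ∘ X) inferInstance⟧)) x ∂P :=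
        integral_congr_ae pull
    _ = ∫ x, (P⟦Y ⁻¹' B ∩ X ⁻¹' S | MeasurableSpace.comap (h ∘ X) inferInstance⟧) x ∂P := by
        refine (integral_congr_ae ?_).symm
        filter_upwards [hci'] with x hx
        simpa using hx
    _ = ∫ x, (Y ⁻¹' B ∩ X ⁻¹' S).indicator (fun _ => (1 : ℝ)) x ∂P := integral_condExp hm'le

lemma abs_sq_le_one {x : ℝ} (hx : |x| ≤ 1) : |x ^ 2| ≤ 1 := by
  have h := abs_nonneg x
  rw [abs_pow]
  nlinarith

lemma condDistrib_comp_ae_eq {β γ : Type*} [MeasurableSpace β] [MeasurableSpace γ]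
    (P : Measure Ω) [IsProbabilityMeasure P] {Y : Ω → ℝ} (hY : Measurable Y)
    {X : Ω → β} (hX : Measurable X) {h : β → γ} (hh : Measurable h)
    (hci : CondIndepFun (MeasurableSpace.comap (h ∘ X) inferInstance)
      ((hh.comp hX).comap_le) Y X P) :
    ∀ᵐ ω ∂P, condDistrib Y X P (X ω) = condDistrib Y (h ∘ X) P ((h ∘ X) ω) := by
  have hq : ∀ q : ℚ, ∀ᵐ ω ∂P, (condDistrib Y X P (X ω) (Iio (q : ℝ))).toReal
      = (condDistrib Y (h ∘ X) P ((h ∘ X) ω) (Iio (q : ℝ))).toReal := fun q => by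
    have e1 := condDistrib_ae_eq_condExp (μ := P) hX hY (measurableSet_Iio (a := (q : ℝ)))
    have e2 := condDistrib_ae_eq_condExp (μ := P) (hh.comp hX) hY
      (measurableSet_Iio (a := (q : ℝ)))
    have e3 := condexp_indicator_comap_eq P hY hX hh hci (measurableSet_Iio (a := (q : ℝ)))
    exact e1.trans (e3.trans e2.symm)
  filter_upwards [ae_all_iff.mpr hq] with ω hω
  refine meas_ext_rat _ _ fun q => ?_
  exact (ENNReal.toReal_eq_toReal_iff' (measure_ne_top _ _) (measure_ne_top _ _)).mp (hω q)

end Transfer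

end SepAux

open SepAux

/-- Data processing inequality and self-equitability:
if `α(h(X)) = α(X)` then `Λ(Y|h∘X) ≤ Λ(Y|X)`, with equality whenever `Y` and `X`
are conditionally independent given `h(X)`. -/
theorem sepCoeff_data_processing
    {Ω : Type*} [MeasurableSpace Ω] [StandardBorelSpace Ω] [Nonempty Ω]
    {p q : ℕ} (hp : 1 ≤ p)
    (P : Measure Ω) [IsProbabilityMeasure P]
    (X : Ω → (Fin p → ℝ)) (Y : Ω → ℝ)
    (hX : Measurable X) (hY : Measurable Y)
    (hXnd : ∃ k, Nondegenerate P fun ω => X ω k)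
    (hYnd : Nondegenerate P Y)
    (h : (Fin p → ℝ) → (Fin q → ℝ)) (hh : Measurable h)
    (hα : alphaCoeff (P.map (h ∘ X)) = alphaCoeff (P.map X)) :
    sepCoeff P Y (h ∘ X) ≤ sepCoeff P Y X
    ∧ (CondIndepFun (MeasurableSpace.comap (h ∘ X) inferInstance) (hh.comp hX).comap_le Y X P →
        sepCoeff P Y (h ∘ X) = sepCoeff P Y X) := by
  haveI hPX : IsProbabilityMeasure (P.map X) := Measure.isProbabilityMeasure_map hX.aemeasurable
  haveI hPW : IsProbabilityMeasure (P.map (h ∘ X)) :=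
    Measure.isProbabilityMeasure_map (hh.comp hX).aemeasurable
  have hDXm := (stronglyMeasurable_Dk (condDistrib Y X P)).measurable
  have hDWm := (stronglyMeasurable_Dk (condDistrib Y (h ∘ X) P)).measurable
  have hDXb := abs_Dk_le (condDistrib Y X P)
  have hDWb := abs_Dk_le (condDistrib Y (h ∘ X) P)
  have hsepX : sepCoeff P Y X = (alphaCoeff (P.map X))⁻¹
      * ∫ z, (Dk (condDistrib Y X P) z) ^ 2 ∂((P.map X).prod (P.map X)) := by
    unfold sepCoeff
    congr 1
    refine integral_congr_ae (Eventually.of_forall fun z => ?_)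
    beta_reduce
    rw [relEffect_sub]
    rfl
  have hsepW : sepCoeff P Y (h ∘ X) = (alphaCoeff (P.map (h ∘ X)))⁻¹
      * ∫ z, (Dk (condDistrib Y (h ∘ X) P) z) ^ 2
          ∂((P.map (h ∘ X)).prod (P.map (h ∘ X))) := by
    unfold sepCoeff
    congr 1
    refine integral_congr_ae (Eventually.of_forall fun z => ?_)
    beta_reduce
    rw [relEffect_sub]
    rfl
  -- transport the h∘X square integral to the X product measure
  have hprodW : (P.map (h ∘ X)).prod (P.map (h ∘ X))
      = ((P.map X).prod (P.map X)).map (Prod.map h h) := by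
    rw [← Measure.map_map hh hX]
    exact Measure.map_prod_map _ _ hh hh
  have hBmap : ∫ z, (Dk (condDistrib Y (h ∘ X) P) z) ^ 2
        ∂((P.map (h ∘ X)).prod (P.map (h ∘ X)))
      = ∫ z : (Fin p → ℝ) × (Fin p → ℝ),
          (Dk (condDistrib Y (h ∘ X) P) (h z.1, h z.2)) ^ 2 ∂((P.map X).prod (P.map X)) := by
    rw [hprodW, integral_map (hh.prodMap hh).aemeasurable
      ((hDWm.pow_const 2).aestronglyMeasurable)]
    rfl
  have hB2 := integral_mul_Dk P hY (hh.comp hX) hDWm hDWb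
  have hC2 := integral_mul_Dk P hY hX
    (φ := fun z => Dk (condDistrib Y (h ∘ X) P) (h z.1, h z.2))
    (hDWm.comp (hh.prodMap hh)) (fun z => hDWb _)
  have hBC : ∫ z, Dk (condDistrib Y (h ∘ X) P) z * Dk (condDistrib Y (h ∘ X) P) z
        ∂((P.map (h ∘ X)).prod (P.map (h ∘ X)))
      = ∫ z, Dk (condDistrib Y (h ∘ X) P) (h z.1, h z.2) * Dk (condDistrib Y X P) z
        ∂((P.map X).prod (P.map X)) := hB2.trans hC2.symm
  have hint1 : Integrable (fun z : (Fin p → ℝ) × (Fin p → ℝ) =>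
      Dk (condDistrib Y (h ∘ X) P) (h z.1, h z.2) * Dk (condDistrib Y X P) z)
      ((P.map X).prod (P.map X)) :=
    integrable_of_abs_le ((hDWm.comp (hh.prodMap hh)).mul hDXm).aestronglyMeasurable
      (C := 1) fun z => abs_mul_le_one (hDWb _) (hDXb _)
  have hintW2 : Integrable (fun z : (Fin p → ℝ) × (Fin p → ℝ) =>
      (Dk (condDistrib Y (h ∘ X) P) (h z.1, h z.2)) ^ 2) ((P.map X).prod (P.map X)) :=
    integrable_of_abs_le ((hDWm.comp (hh.prodMap hh)).pow_const 2).aestronglyMeasurable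
      (C := 1) fun z => abs_sq_le_one (hDWb _)
  have hintX2 : Integrable (fun z : (Fin p → ℝ) × (Fin p → ℝ) =>
      (Dk (condDistrib Y X P) z) ^ 2) ((P.map X).prod (P.map X)) :=
    integrable_of_abs_le (hDXm.pow_const 2).aestronglyMeasurable
      (C := 1) fun z => abs_sq_le_one (hDXb _)
  have hBA : ∫ z, (Dk (condDistrib Y (h ∘ X) P) z) ^ 2
        ∂((P.map (h ∘ X)).prod (P.map (h ∘ X)))
      ≤ ∫ z, (Dk (condDistrib Y X P) z) ^ 2 ∂((P.map X).prod (P.map X)) := by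
    have e0 : ∫ z, (Dk (condDistrib Y (h ∘ X) P) z) ^ 2
          ∂((P.map (h ∘ X)).prod (P.map (h ∘ X)))
        = ∫ z, Dk (condDistrib Y (h ∘ X) P) z * Dk (condDistrib Y (h ∘ X) P) z
          ∂((P.map (h ∘ X)).prod (P.map (h ∘ X))) :=
      integral_congr_ae (Eventually.of_forall fun z => pow_two _)
    have e2 : ∫ z, Dk (condDistrib Y (h ∘ X) P) (h z.1, h z.2) * Dk (condDistrib Y X P) z
          ∂((P.map X).prod (P.map X))
        ≤ ∫ z : (Fin p → ℝ) × (Fin p → ℝ),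
            ((1 / 2) * (Dk (condDistrib Y (h ∘ X) P) (h z.1, h z.2)) ^ 2
              + (1 / 2) * (Dk (condDistrib Y X P) z) ^ 2) ∂((P.map X).prod (P.map X)) := by
      refine integral_mono hint1 ((hintW2.const_mul _).add (hintX2.const_mul _)) fun z => ?_
      nlinarith [sq_nonneg (Dk (condDistrib Y (h ∘ X) P) (h z.1, h z.2)
        - Dk (condDistrib Y X P) z)]
    have e3 : ∫ z : (Fin p → ℝ) × (Fin p → ℝ),
          ((1 / 2) * (Dk (condDistrib Y (h ∘ X) P) (h z.1, h z.2)) ^ 2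
            + (1 / 2) * (Dk (condDistrib Y X P) z) ^ 2) ∂((P.map X).prod (P.map X))
        = (1 / 2) * (∫ z : (Fin p → ℝ) × (Fin p → ℝ),
              (Dk (condDistrib Y (h ∘ X) P) (h z.1, h z.2)) ^ 2 ∂((P.map X).prod (P.map X)))
          + (1 / 2) * ∫ z, (Dk (condDistrib Y X P) z) ^ 2 ∂((P.map X).prod (P.map X)) := by
      rw [integral_add (hintW2.const_mul _) (hintX2.const_mul _), integral_const_mul,
        integral_const_mul]
    have := (e0.trans hBC).trans_le (e2.trans_eq e3)
    rw [← hBmap] at this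
    linarith
  refine ⟨?_, ?_⟩
  · rw [hsepX, hsepW, hα]
    exact mul_le_mul_of_nonneg_left hBA (inv_nonneg.mpr (alphaCoeff_nonneg _))
  · intro hci
    have hcoll := condDistrib_comp_ae_eq P hY hX hh hci
    have hprodX : (P.map X).prod (P.map X) = (P.prod P).map (Prod.map X X) :=
      Measure.map_prod_map _ _ hX hX
    have hprodW2 : (P.map (h ∘ X)).prod (P.map (h ∘ X))
        = (P.prod P).map (Prod.map (h ∘ X) (h ∘ X)) :=
      Measure.map_prod_map _ _ (hh.comp hX) (hh.comp hX)
    have hA2 : ∫ z, (Dk (condDistrib Y X P) z) ^ 2 ∂((P.map X).prod (P.map X))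
        = ∫ ω : Ω × Ω, (Dk (condDistrib Y X P) (X ω.1, X ω.2)) ^ 2 ∂(P.prod P) := by
      rw [hprodX, integral_map (hX.prodMap hX).aemeasurable
        ((hDXm.pow_const 2).aestronglyMeasurable)]
      rfl
    have hB3 : ∫ z, (Dk (condDistrib Y (h ∘ X) P) z) ^ 2
          ∂((P.map (h ∘ X)).prod (P.map (h ∘ X)))
        = ∫ ω : Ω × Ω, (Dk (condDistrib Y (h ∘ X) P) ((h ∘ X) ω.1, (h ∘ X) ω.2)) ^ 2
          ∂(P.prod P) := by
      rw [hprodW2, integral_map ((hh.comp hX).prodMap (hh.comp hX)).aemeasurable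
        ((hDWm.pow_const 2).aestronglyMeasurable)]
      rfl
    have hmfst : (P.prod P).map Prod.fst = P := by
      rw [Measure.map_fst_prod]
      simp [measure_univ]
    have hmsnd : (P.prod P).map Prod.snd = P := by
      rw [Measure.map_snd_prod]
      simp [measure_univ]
    have h1 : ∀ᵐ ω : Ω × Ω ∂(P.prod P),
        condDistrib Y X P (X ω.1) = condDistrib Y (h ∘ X) P ((h ∘ X) ω.1) := by
      refine ae_of_ae_map (p := fun ωx =>
        condDistrib Y X P (X ωx) = condDistrib Y (h ∘ X) P ((h ∘ X) ωx))
        measurable_fst.aemeasurable ?_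
      rw [hmfst]; exact hcoll
    have h2 : ∀ᵐ ω : Ω × Ω ∂(P.prod P),
        condDistrib Y X P (X ω.2) = condDistrib Y (h ∘ X) P ((h ∘ X) ω.2) := by
      refine ae_of_ae_map (p := fun ωx =>
        condDistrib Y X P (X ωx) = condDistrib Y (h ∘ X) P ((h ∘ X) ωx))
        measurable_snd.aemeasurable ?_
      rw [hmsnd]; exact hcoll
    have hAB : ∫ z, (Dk (condDistrib Y X P) z) ^ 2 ∂((P.map X).prod (P.map X))
        = ∫ z, (Dk (condDistrib Y (h ∘ X) P) z) ^ 2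
          ∂((P.map (h ∘ X)).prod (P.map (h ∘ X))) := by
      rw [hA2, hB3]
      refine integral_congr_ae ?_
      filter_upwards [h1, h2] with ω e1 e2
      have hd : Dk (condDistrib Y X P) (X ω.1, X ω.2)
          = Dk (condDistrib Y (h ∘ X) P) ((h ∘ X) ω.1, (h ∘ X) ω.2) := by
        unfold Dk
        rw [e1, e2]
      rw [hd]
    rw [hsepX, hsepW, hα, hAB]
end

section
/- Let X = (X₁,…,X_p) be a random vector and (X_n = (X_{1,n},…,X_{p,n}))_{n∈ℕ} a sequence of random vectors in ℝ^p. If there is some k ∈ {1,…,p} such that (i) F_{X_k} is continuous, and (ii) F_{X_{k,n}}(F_{X_{k,n}}⁻¹(t)) → t = F_{X_k}(F_{X_k}⁻¹(t)) for Lebesgue-almost all t ∈ (0, 1), then α(X_n) → α(X) as n → ∞ (and α(X) = 1). -/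
open MeasureTheory ProbabilityTheory Set Filter Topology

/-- The cdf of a law on `ℝ`: `F(w) = μ(-∞, w]`. -/
noncomputable def mcdf (μ : Measure ℝ) (w : ℝ) : ℝ := (μ (Set.Iic w)).toReal

/-- The pseudo-inverse (quantile function) of the cdf: `F⁻¹(t) = inf { w : F(w) ≥ t }`. -/
noncomputable def mquantile (μ : Measure ℝ) (t : ℝ) : ℝ := sInf {w : ℝ | t ≤ mcdf μ w}

section Auxiliary

open scoped ENNReal NNReal

lemma aux_measurable_meas_singleton {E : Type*} [MeasurableSpace E] (μ : Measure E) [SFinite μ]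
    (hd : MeasurableSet {q : E × E | q.1 = q.2}) :
    Measurable fun x => μ {x} := by
  have h := measurable_measure_prodMk_left (ν := μ) hd
  have hpre : ∀ x : E, (Prod.mk x ⁻¹' {q : E × E | q.1 = q.2}) = {x} := by
    intro x; ext y; simp [eq_comm]
  simpa [hpre] using h

lemma aux_diag_measurable {E : Type*} [TopologicalSpace E] [MeasurableSpace E]
    [OpensMeasurableSpace E] [T2Space E] [SecondCountableTopology E] :
    MeasurableSet {q : E × E | q.1 = q.2} :=
  isClosed_diagonal.measurableSet

lemma mcdf_mono (ν : Measure ℝ) [IsFiniteMeasure ν] : Monotone (mcdf ν) := fun _ _ h =>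
  ENNReal.toReal_mono (measure_ne_top _ _) (measure_mono (Set.Iic_subset_Iic.2 h))

lemma mcdf_le_one (ν : Measure ℝ) [IsProbabilityMeasure ν] (w : ℝ) : mcdf ν w ≤ 1 := by
  have := ENNReal.toReal_mono (a := ν (Set.Iic w)) ENNReal.one_ne_top prob_le_one
  simpa [mcdf] using this

lemma mquantile_eq {ν : Measure ℝ} [IsFiniteMeasure ν] {a t : ℝ}
    (h1 : (ν (Set.Iio a)).toReal < t) (h2 : t ≤ mcdf ν a) : mquantile ν t = a := by
  have hmem : a ∈ {w : ℝ | t ≤ mcdf ν w} := h2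
  have hlb : ∀ w ∈ {w : ℝ | t ≤ mcdf ν w}, a ≤ w := by
    intro w hw
    have hw' : t ≤ mcdf ν w := hw
    by_contra hlt
    push_neg at hlt
    have hsub : Set.Iic w ⊆ Set.Iio a := Set.Iic_subset_Iio.mpr hlt
    have : mcdf ν w ≤ (ν (Set.Iio a)).toReal :=
      ENNReal.toReal_mono (measure_ne_top _ _) (measure_mono hsub)
    linarith
  exact le_antisymm (csInf_le ⟨a, hlb⟩ hmem) (le_csInf ⟨a, hmem⟩ hlb)

lemma lintegral_Ioo_triangle {c d : ℝ} (h : c ≤ d) :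
    ∫⁻ t in Set.Ioo c d, ENNReal.ofReal (d - t) = ENNReal.ofReal ((d - c)^2 / 2) := by
  rw [Measure.restrict_congr_set Ioo_ae_eq_Ioc]
  rw [← ofReal_integral_eq_lintegral_ofReal]
  · congr 1
    rw [← intervalIntegral.integral_of_le h,
      intervalIntegral.integral_sub intervalIntegrable_const intervalIntegral.intervalIntegrable_id,
      integral_id, intervalIntegral.integral_const, smul_eq_mul]
    ring
  · exact (continuous_const.sub continuous_id).integrableOn_Ioc
  · filter_upwards [ae_restrict_mem measurableSet_Ioc] with t ht
    exact sub_nonneg.2 ht.2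

lemma mcdf_split (ν : Measure ℝ) [IsFiniteMeasure ν] (a : ℝ) :
    mcdf ν a = (ν (Set.Iio a)).toReal + (ν {a}).toReal := by
  have hsplit : ν (Set.Iic a) = ν (Set.Iio a) + ν {a} := by
    rw [← Set.Iio_union_right, measure_union (by simp) (measurableSet_singleton a)]
  rw [mcdf, hsplit, ENNReal.toReal_add (measure_ne_top _ _) (measure_ne_top _ _)]

lemma atomless_of_continuous_mcdf {ν : Measure ℝ} [IsProbabilityMeasure ν]
    (h : Continuous (mcdf ν)) (a : ℝ) : ν {a} = 0 := by
  have hseq : Tendsto (fun n : ℕ => a - 1 / (n + 1)) atTop (𝓝 a) := by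
    have h0 := tendsto_one_div_add_atTop_nhds_zero_nat (𝕜 := ℝ)
    have := tendsto_const_nhds (x := a) (f := atTop (α := ℕ)) |>.sub h0
    simpa using this
  have h1 : Tendsto (fun n : ℕ => mcdf ν (a - 1 / (n + 1))) atTop (𝓝 (mcdf ν a)) :=
    (h.tendsto a).comp hseq
  have h2 : Tendsto (fun n : ℕ => ν (Set.Iic (a - 1 / (n + 1)))) atTop (𝓝 (ν (Set.Iio a))) := by
    have hmono : Monotone fun n : ℕ => Set.Iic (a - 1 / ((n : ℝ) + 1)) := by
      intro m n hmn
      apply Set.Iic_subset_Iic.mpr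
      have h1n : (1:ℝ) / (n + 1) ≤ 1 / (m + 1) := by
        apply one_div_le_one_div_of_le (by positivity)
        have : (m : ℝ) ≤ n := by exact_mod_cast hmn
        linarith
      linarith
    have hU : ⋃ n : ℕ, Set.Iic (a - 1 / ((n : ℝ) + 1)) = Set.Iio a := by
      ext x
      simp only [Set.mem_iUnion, Set.mem_Iic, Set.mem_Iio]
      constructor
      · rintro ⟨n, hn⟩
        have : (0:ℝ) < 1/((n:ℝ)+1) := by positivity
        linarith
      · intro hx
        obtain ⟨n, hn⟩ := exists_nat_one_div_lt (sub_pos.mpr hx)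
        exact ⟨n, by linarith⟩
    have := tendsto_measure_iUnion_atTop (μ := ν) hmono
    rw [hU] at this
    exact this
  have h3 : Tendsto (fun n : ℕ => mcdf ν (a - 1 / (n + 1))) atTop (𝓝 ((ν (Set.Iio a)).toReal)) :=
    (ENNReal.tendsto_toReal (measure_ne_top _ _)).comp h2
  have heq : (ν (Set.Iio a)).toReal = mcdf ν a := tendsto_nhds_unique h3 h1
  have htr := mcdf_split ν a
  have hz : (ν {a}).toReal = 0 := by linarith
  exact ((ENNReal.toReal_eq_zero_iff _).mp hz).resolve_right (measure_ne_top _ _)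

lemma quantile_set_bddBelow {ν : Measure ℝ} [IsProbabilityMeasure ν] {t : ℝ} (ht : 0 < t) :
    BddBelow {w : ℝ | t ≤ mcdf ν w} := by
  have hanti : Antitone fun n : ℕ => Set.Iic (-(n : ℝ)) := by
    intro m n hmn
    apply Set.Iic_subset_Iic.mpr
    simp only [neg_le_neg_iff]
    exact_mod_cast hmn
  have hI : ⋂ n : ℕ, Set.Iic (-(n : ℝ)) = (∅ : Set ℝ) := by
    ext x
    simp only [Set.mem_iInter, Set.mem_Iic, Set.mem_empty_iff_false, iff_false, not_forall]
    obtain ⟨n, hn⟩ := exists_nat_gt (-x)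
    exact ⟨n, by push_neg; linarith⟩
  have h2 : Tendsto (fun n : ℕ => ν (Set.Iic (-(n:ℝ)))) atTop (𝓝 0) := by
    have := tendsto_measure_iInter_atTop (μ := ν)
      (fun n => measurableSet_Iic.nullMeasurableSet) hanti ⟨0, measure_ne_top _ _⟩
    rw [hI] at this
    simpa [Function.comp_def] using this
  have h3 : Tendsto (fun n : ℕ => mcdf ν (-(n:ℝ))) atTop (𝓝 0) := by
    have := (ENNReal.tendsto_toReal (by simp)).comp h2
    simpa [mcdf, Function.comp_def] using this
  obtain ⟨n, hn⟩ := (h3.eventually (eventually_lt_nhds ht)).exists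
  refine ⟨-(n:ℝ), fun w hw => ?_⟩
  have hw' : t ≤ mcdf ν w := hw
  by_contra hlt
  push_neg at hlt
  have := mcdf_mono ν hlt.le
  linarith

lemma quantile_set_nonempty {ν : Measure ℝ} [IsProbabilityMeasure ν] {t : ℝ} (ht : t < 1) :
    {w : ℝ | t ≤ mcdf ν w}.Nonempty := by
  have h1 : Tendsto (fun x : ℝ => ν (Set.Iic x)) atTop (𝓝 1) := by
    simpa using tendsto_measure_Iic_atTop (μ := ν)
  have h2 : Tendsto (mcdf ν) atTop (𝓝 1) := by
    have := (ENNReal.tendsto_toReal (by simp)).comp h1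
    exact this
  obtain ⟨w, hw⟩ := (h2.eventually (eventually_gt_nhds ht)).exists
  exact ⟨w, hw.le⟩

lemma monotoneOn_mcdf_mquantile (ν : Measure ℝ) [IsProbabilityMeasure ν] :
    MonotoneOn (fun t => mcdf ν (mquantile ν t)) (Set.Ioo (0:ℝ) 1) := by
  intro s hs t ht hst
  apply mcdf_mono
  exact csInf_le_csInf (quantile_set_bddBelow hs.1) (quantile_set_nonempty ht.2)
    (fun w hw => le_trans hst hw)

lemma key_bound (ν : Measure ℝ) [IsProbabilityMeasure ν] :
    ∫⁻ y, ν {y} ∂ν ≤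
      2 * ∫⁻ t in Set.Ioo (0:ℝ) 1, ENNReal.ofReal (mcdf ν (mquantile ν t) - t) := by
  classical
  have hmeas : Measurable fun y : ℝ => ν {y} :=
    aux_measurable_meas_singleton ν aux_diag_measurable
  set D : Set ℝ := {y | 0 < ν {y}} with hDdef
  have hDmeas : MeasurableSet D := by
    have h : D = (fun y => ν {y}) ⁻¹' (Set.Ioi 0) := rfl
    rw [h]; exact hmeas measurableSet_Ioi
  have hDcount : D.Countable := by
    apply Measure.countable_meas_pos_of_disjoint_iUnion (μ := ν)
      (As := fun a : ℝ => {a}) (fun a => measurableSet_singleton a)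
    intro a b hab
    exact Set.disjoint_singleton.mpr hab
  haveI : Countable D := hDcount.to_subtype
  have hz : ∫⁻ y in Dᶜ, ν {y} ∂ν = 0 := by
    have hae : ∀ᵐ y ∂ν, y ∈ Dᶜ → ν {y} = (fun _ => (0:ℝ≥0∞)) y := ae_of_all _ fun y hy => by
      simpa [hDdef, Set.mem_compl_iff, not_lt, nonpos_iff_eq_zero] using hy
    rw [setLIntegral_congr_fun_ae hDmeas.compl hae, lintegral_zero]
  have hsplit : ∫⁻ y, ν {y} ∂ν = ∑' a : D, ν {(a : ℝ)} * ν {(a : ℝ)} :=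
    calc ∫⁻ y, ν {y} ∂ν = ∫⁻ y in D, ν {y} ∂ν + ∫⁻ y in Dᶜ, ν {y} ∂ν :=
          (lintegral_add_compl _ hDmeas).symm
      _ = ∫⁻ y in D, ν {y} ∂ν := by rw [hz, add_zero]
      _ = ∑' a : D, ν {(a:ℝ)} * ν {(a:ℝ)} := lintegral_countable _ hDcount
  have hatomint : ∀ a : ℝ, ν {a} * ν {a} = 2 * ∫⁻ t in Set.Ioo ((ν (Set.Iio a)).toReal) (mcdf ν a),
      ENNReal.ofReal (mcdf ν (mquantile ν t) - t) := by
    intro a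
    have hle : (ν (Set.Iio a)).toReal ≤ mcdf ν a :=
      ENNReal.toReal_mono (measure_ne_top _ _) (measure_mono Set.Iio_subset_Iic_self)
    rw [setLIntegral_congr_fun_ae measurableSet_Ioo
      (ae_of_all _ fun t ht => by rw [mquantile_eq ht.1 ht.2.le]),
      lintegral_Ioo_triangle hle]
    have hm : mcdf ν a - (ν (Set.Iio a)).toReal = (ν {a}).toReal := by
      have := mcdf_split ν a; linarith
    rw [hm]
    rw [show (2:ℝ≥0∞) = ENNReal.ofReal 2 by simp,
      ← ENNReal.ofReal_mul (by norm_num),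
      show (2:ℝ) * ((ν {a}).toReal ^ 2 / 2) = (ν {a}).toReal * (ν {a}).toReal by ring,
      ENNReal.ofReal_mul ENNReal.toReal_nonneg, ENNReal.ofReal_toReal (measure_ne_top _ _)]
  have hdisjkey : ∀ x y : ℝ, x < y →
      Disjoint (Set.Ioo ((ν (Set.Iio x)).toReal) (mcdf ν x))
        (Set.Ioo ((ν (Set.Iio y)).toReal) (mcdf ν y)) := by
    intro x y hxy
    apply Set.disjoint_left.mpr
    intro t ht ht'
    have hle : mcdf ν x ≤ (ν (Set.Iio y)).toReal :=
      ENNReal.toReal_mono (measure_ne_top _ _) (measure_mono (Set.Iic_subset_Iio.mpr hxy))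
    have := ht.2; have := ht'.1
    linarith
  have hdisj : Pairwise (Function.onFun Disjoint fun a : D =>
      Set.Ioo ((ν (Set.Iio (a:ℝ))).toReal) (mcdf ν (a:ℝ))) := by
    intro a b hab
    have hne : (a:ℝ) ≠ (b:ℝ) := Subtype.coe_ne_coe.mpr hab
    rcases hne.lt_or_gt with h | h
    · exact hdisjkey _ _ h
    · exact (hdisjkey _ _ h).symm
  have hTsub : (⋃ a : D, Set.Ioo ((ν (Set.Iio (a:ℝ))).toReal) (mcdf ν (a:ℝ))) ⊆
      Set.Ioo (0:ℝ) 1 := by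
    apply Set.iUnion_subset
    intro a t ht
    exact ⟨lt_of_le_of_lt ENNReal.toReal_nonneg ht.1, lt_of_lt_of_le ht.2 (mcdf_le_one ν _)⟩
  calc ∫⁻ y, ν {y} ∂ν = ∑' a : D, ν {(a:ℝ)} * ν {(a:ℝ)} := hsplit
    _ = ∑' a : D, 2 * ∫⁻ t in Set.Ioo ((ν (Set.Iio (a:ℝ))).toReal) (mcdf ν (a:ℝ)),
          ENNReal.ofReal (mcdf ν (mquantile ν t) - t) := tsum_congr fun a => hatomint a
    _ = 2 * ∑' a : D, ∫⁻ t in Set.Ioo ((ν (Set.Iio (a:ℝ))).toReal) (mcdf ν (a:ℝ)),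
          ENNReal.ofReal (mcdf ν (mquantile ν t) - t) := ENNReal.tsum_mul_left
    _ = 2 * ∫⁻ t in ⋃ a : D, Set.Ioo ((ν (Set.Iio (a:ℝ))).toReal) (mcdf ν (a:ℝ)),
          ENNReal.ofReal (mcdf ν (mquantile ν t) - t) := by
        rw [lintegral_iUnion (fun a => measurableSet_Ioo) hdisj]
    _ ≤ 2 * ∫⁻ t in Set.Ioo (0:ℝ) 1, ENNReal.ofReal (mcdf ν (mquantile ν t) - t) :=
        mul_le_mul_right (lintegral_mono_set hTsub) 2

end Auxiliary

open scoped ENNReal NNReal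

/-- Convergence of the normalizing constant `α` when some fixed coordinate of the limit has a
continuous cdf and the quantile transform condition holds for that coordinate. -/
theorem alphaCoeff_tendsto_of_continuous_coordinate
    {p : ℕ} (hp : 1 ≤ p)
    (μ : Measure (Fin p → ℝ)) [IsProbabilityMeasure μ]
    (μn : ℕ → Measure (Fin p → ℝ)) [∀ n, IsProbabilityMeasure (μn n)]
    (k : Fin p)
    (hcont : Continuous (mcdf (μ.map fun x => x k)))
    (hquant : ∀ᵐ t ∂(volume.restrict (Set.Ioo (0 : ℝ) 1)),
      Tendsto (fun n => mcdf ((μn n).map fun x => x k)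
          (mquantile ((μn n).map fun x => x k) t)) atTop (𝓝 t)) :
    Tendsto (fun n => alphaCoeff (μn n)) atTop (𝓝 (alphaCoeff μ))
    ∧ alphaCoeff μ = 1 := by
  have hk : Measurable fun x : Fin p → ℝ => x k := measurable_pi_apply k
  haveI : IsProbabilityMeasure (μ.map fun x => x k) :=
    Measure.isProbabilityMeasure_map hk.aemeasurable
  haveI hPn : ∀ n, IsProbabilityMeasure ((μn n).map fun x => x k) :=
    fun n => Measure.isProbabilityMeasure_map hk.aemeasurable
  -- α(μ) = 1
  have hatom : ∀ a : ℝ, (μ.map fun x => x k) {a} = 0 := atomless_of_continuous_mcdf hcont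
  have hzero : ∀ x : Fin p → ℝ, μ {x} = 0 := by
    intro x
    have hle : μ {x} ≤ (μ.map fun x => x k) {x k} := by
      rw [Measure.map_apply hk (measurableSet_singleton _)]
      refine measure_mono fun y hy => ?_
      simp only [Set.mem_singleton_iff] at hy
      simp [Set.mem_preimage, hy]
    simpa [hatom] using hle
  have halpha : alphaCoeff μ = 1 := by
    simp [alphaCoeff, hzero]
  refine ⟨?_, halpha⟩
  rw [halpha]
  have hmeasn : ∀ n, Measurable fun x : Fin p → ℝ => (μn n) {x} :=
    fun n => aux_measurable_meas_singleton (μn n) aux_diag_measurable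
  -- dominated convergence for the quantile-transform integrals
  have hCto : Tendsto (fun n => ∫⁻ t in Set.Ioo (0:ℝ) 1,
      ENNReal.ofReal (mcdf ((μn n).map fun x => x k) (mquantile ((μn n).map fun x => x k) t) - t))
      atTop (𝓝 0) := by
    have hF_meas : ∀ n, AEMeasurable (fun t => ENNReal.ofReal
        (mcdf ((μn n).map fun x => x k) (mquantile ((μn n).map fun x => x k) t) - t))
        (volume.restrict (Set.Ioo (0:ℝ) 1)) := by
      intro n
      apply ENNReal.measurable_ofReal.comp_aemeasurable
      exact (aemeasurable_restrict_of_monotoneOn measurableSet_Ioo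
        (monotoneOn_mcdf_mquantile _)).sub aemeasurable_id
    have h_bound : ∀ n, (fun t => ENNReal.ofReal
        (mcdf ((μn n).map fun x => x k) (mquantile ((μn n).map fun x => x k) t) - t))
        ≤ᵐ[volume.restrict (Set.Ioo (0:ℝ) 1)] fun _ => 1 := by
      intro n
      filter_upwards [ae_restrict_mem measurableSet_Ioo] with t ht
      have h1 : mcdf ((μn n).map fun x => x k) (mquantile ((μn n).map fun x => x k) t) ≤ 1 :=
        mcdf_le_one _ _
      have h2 : mcdf ((μn n).map fun x => x k) (mquantile ((μn n).map fun x => x k) t) - t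
          ≤ 1 := by linarith [ht.1]
      exact le_trans (ENNReal.ofReal_le_ofReal h2) (by simp)
    have h_fin : ∫⁻ _ in Set.Ioo (0:ℝ) 1, (1:ℝ≥0∞) ≠ ⊤ := by simp [Real.volume_Ioo]
    have h_lim : ∀ᵐ t ∂(volume.restrict (Set.Ioo (0:ℝ) 1)),
        Tendsto (fun n => ENNReal.ofReal
          (mcdf ((μn n).map fun x => x k) (mquantile ((μn n).map fun x => x k) t) - t))
          atTop (𝓝 ((fun _ => (0:ℝ≥0∞)) t)) := by
      filter_upwards [hquant] with t ht
      have hsub : Tendsto (fun n => mcdf ((μn n).map fun x => x k)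
          (mquantile ((μn n).map fun x => x k) t) - t) atTop (𝓝 0) := by
        simpa using ht.sub (tendsto_const_nhds (x := t))
      have := (ENNReal.continuous_ofReal.tendsto 0).comp hsub
      simpa [Function.comp_def] using this
    have hmain := tendsto_lintegral_of_dominated_convergence'
      (μ := volume.restrict (Set.Ioo (0:ℝ) 1)) (fun _ => 1) hF_meas h_bound h_fin h_lim
    simpa using hmain
  -- ∫⁻ μn{x} dμn → 0
  have hIto : Tendsto (fun n => ∫⁻ x, (μn n) {x} ∂(μn n)) atTop (𝓝 0) := by
    have hub : ∀ n, ∫⁻ x, (μn n) {x} ∂(μn n) ≤ 2 * ∫⁻ t in Set.Ioo (0:ℝ) 1,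
        ENNReal.ofReal (mcdf ((μn n).map fun x => x k)
          (mquantile ((μn n).map fun x => x k) t) - t) := by
      intro n
      have hlem : ∀ x : Fin p → ℝ, (μn n) {x} ≤ ((μn n).map fun x => x k) {x k} := by
        intro x
        rw [Measure.map_apply hk (measurableSet_singleton _)]
        refine measure_mono fun y hy => ?_
        simp only [Set.mem_singleton_iff] at hy
        simp [Set.mem_preimage, hy]
      calc ∫⁻ x, (μn n) {x} ∂(μn n) ≤ ∫⁻ x, ((μn n).map fun x => x k) {x k} ∂(μn n) :=
            lintegral_mono hlem
        _ = ∫⁻ y, ((μn n).map fun x => x k) {y} ∂((μn n).map fun x => x k) :=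
            (lintegral_map (aux_measurable_meas_singleton _ aux_diag_measurable) hk).symm
        _ ≤ _ := key_bound _
    have h2C : Tendsto (fun n => 2 * ∫⁻ t in Set.Ioo (0:ℝ) 1,
        ENNReal.ofReal (mcdf ((μn n).map fun x => x k)
          (mquantile ((μn n).map fun x => x k) t) - t)) atTop (𝓝 0) := by
      have := ENNReal.Tendsto.const_mul hCto (Or.inr (by norm_num : (2:ℝ≥0∞) ≠ ⊤))
      simpa using this
    exact tendsto_of_tendsto_of_tendsto_of_le_of_le tendsto_const_nhds h2C
      (fun n => zero_le) hub
  have htoReal : Tendsto (fun n => (∫⁻ x, (μn n) {x} ∂(μn n)).toReal) atTop (𝓝 0) := by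
    have := (ENNReal.tendsto_toReal (by simp)).comp hIto
    simpa [Function.comp_def] using this
  have halphan : ∀ n, alphaCoeff (μn n) = 1 - (∫⁻ x, (μn n) {x} ∂(μn n)).toReal := by
    intro n
    unfold alphaCoeff
    congr 1
    rw [integral_toReal ((hmeasn n).aemeasurable) (ae_of_all _ fun x => measure_lt_top _ _)]
  simp_rw [halphan]
  have := tendsto_const_nhds (x := (1:ℝ)) (f := atTop (α := ℕ)) |>.sub htoReal
  simpa using this
end

section
/- Robustness of Λ against small perturbations of the response: let (X, Y) be a (p+1)-dimensional random vector and (ε_n)_{n∈ℕ} a sequence of real random variables on the same probability space. If (i) ε_n → 0 in distribution and, for every n, ε_n is independent of the pair (X, Y), and (ii) F_{Y+ε_n}(F_{Y+ε_n}⁻¹(t)) → F_Y(F_Y⁻¹(t)) for Lebesgue-almost all t ∈ (0, 1), then Λ(Y + ε_n | X) → Λ(Y|X) as n → ∞. -/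
open MeasureTheory ProbabilityTheory Set Filter Topology

namespace SepRobustAux


noncomputable def sgn0 (t : ℝ) : ℝ := if 0 < t then 1 else if t < 0 then -1 else 0

lemma sgn0_measurable : Measurable sgn0 := by
  unfold sgn0
  exact Measurable.ite (measurableSet_lt measurable_const measurable_id) measurable_const
    (Measurable.ite (measurableSet_lt measurable_id measurable_const) measurable_const
      measurable_const)

lemma abs_sgn0_le (t : ℝ) : |sgn0 t| ≤ 1 := by
  unfold sgn0; split_ifs <;> norm_num

lemma sgn0_zero : sgn0 0 = 0 := by simp [sgn0]

lemma sgn0_neg (t : ℝ) : sgn0 (-t) = - sgn0 t := by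
  rcases lt_trichotomy t 0 with h | h | h
  · simp [sgn0, h, neg_pos.2 h, not_lt.2 h.le, not_lt.2 (neg_pos.2 h).le]
  · simp [sgn0, h]
  · simp [sgn0, h, not_lt.2 h.le, neg_neg_of_pos h, not_lt.2 (neg_nonpos_of_nonneg h.le)]

lemma sgn0_add_of_abs_lt {s d : ℝ} (h : |d| < |s|) : sgn0 (s + d) = sgn0 s := by
  rcases lt_trichotomy 0 s with hs | hs | hs
  · rw [abs_of_pos hs] at h
    have h1 : 0 < s + d := by have := (abs_lt.1 h).1; linarith
    simp [sgn0, hs, h1]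
  · exfalso; rw [← hs, abs_zero] at h; exact absurd h (not_lt.2 (abs_nonneg d))
  · rw [abs_of_neg hs] at h
    have h2 : s + d < 0 := by have := (abs_lt.1 h).2; linarith
    simp [sgn0, hs, h2, not_lt.2 h2.le, not_lt.2 hs.le]

noncomputable def phid (q : ℝ × ℝ) : ℝ := sgn0 (q.2 - q.1)

lemma phid_measurable : Measurable phid :=
  sgn0_measurable.comp (measurable_snd.sub measurable_fst)

lemma abs_phid_le (q : ℝ × ℝ) : |phid q| ≤ 1 := abs_sgn0_le _

noncomputable def psif (q : ℝ × ℝ) : ℝ :=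
  (if q.1 < q.2 then 1 else 0) + (1 / 2) * (if q.1 = q.2 then 1 else 0)

lemma psif_measurable : Measurable psif := by
  unfold psif
  refine Measurable.add ?_ (Measurable.const_mul ?_ _)
  · exact Measurable.ite (measurableSet_lt measurable_fst measurable_snd)
      measurable_const measurable_const
  · exact Measurable.ite (measurableSet_eq_fun measurable_fst measurable_snd)
      measurable_const measurable_const

lemma abs_psif_le (q : ℝ × ℝ) : |psif q| ≤ 2 := by
  unfold psif; split_ifs <;> rw [abs_le] <;> constructor <;> norm_num

lemma integrable_of_bdd {α : Type*} [MeasurableSpace α] {μ : Measure α} [IsFiniteMeasure μ]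
    {f : α → ℝ} {C : ℝ} (hf : AEStronglyMeasurable f μ) (h : ∀ a, |f a| ≤ C) :
    Integrable f μ :=
  ⟨hf, HasFiniteIntegral.of_bounded (C := C) (ae_of_all _ (fun a => by
    simpa [Real.norm_eq_abs] using h a))⟩

lemma relEffect_eq_integral (μ ν : Measure ℝ) [IsFiniteMeasure μ] [IsFiniteMeasure ν] :
    relEffect μ ν = ∫ q, psif q ∂(μ.prod ν) := by
  have hint : Integrable psif (μ.prod ν) :=
    integrable_of_bdd psif_measurable.aestronglyMeasurable abs_psif_le
  rw [integral_prod_symm _ hint]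
  unfold relEffect
  refine integral_congr_ae (ae_of_all _ fun v => ?_)
  dsimp only
  have hrw : (fun x => psif (x, v))
      = fun x => Set.indicator (Set.Iio v) 1 x + (1 / 2) * Set.indicator {v} 1 x := by
    funext x
    simp [psif, Set.indicator_apply, Set.mem_Iio]
  have h1 : Integrable (fun x : ℝ => Set.indicator (Set.Iio v) 1 x) μ :=
    (integrable_const (1:ℝ)).indicator measurableSet_Iio
  have h2 : Integrable (fun x : ℝ => (1/2 : ℝ) * Set.indicator {v} 1 x) μ :=
    ((integrable_const (1:ℝ)).indicator (measurableSet_singleton v)).const_mul _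
  rw [hrw, integral_add h1 h2, MeasureTheory.integral_const_mul, integral_indicator_one measurableSet_Iio,
    integral_indicator_one (measurableSet_singleton v), measureReal_def, measureReal_def]

lemma relEffect_sub (μ ν : Measure ℝ) [IsProbabilityMeasure μ] [IsProbabilityMeasure ν] :
    relEffect μ ν - relEffect ν μ = ∫ q, phid q ∂(μ.prod ν) := by
  rw [relEffect_eq_integral μ ν, relEffect_eq_integral ν μ]
  have hswap : ∫ q, psif q ∂(ν.prod μ) = ∫ q, psif (Prod.swap q) ∂(μ.prod ν) := by
    rw [← Measure.prod_swap,
      integral_map measurable_swap.aemeasurable psif_measurable.aestronglyMeasurable]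
  have hg : Integrable (fun q : ℝ × ℝ => psif q.swap) (μ.prod ν) :=
    integrable_of_bdd (psif_measurable.comp measurable_swap).aestronglyMeasurable
      (fun q => abs_psif_le _)
  rw [hswap, ← integral_sub (integrable_of_bdd psif_measurable.aestronglyMeasurable abs_psif_le) hg]
  refine integral_congr_ae (ae_of_all _ fun q => ?_)
  rcases lt_trichotomy q.1 q.2 with h | h | h
  · simp [psif, phid, sgn0, h, h.ne, h.ne', not_lt.2 h.le, sub_pos.mpr h, Prod.swap]
  · simp [psif, phid, sgn0, h, lt_irrefl, Prod.swap, sub_self]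
  · simp [psif, phid, sgn0, h, h.ne, h.ne', not_lt.2 h.le, sub_neg.mpr h,
      not_lt.2 (sub_neg.mpr h).le, Prod.swap]



lemma tendsto_tail_measure (ρ : ℕ → Measure ℝ) (hprob : ∀ n, IsProbabilityMeasure (ρ n))
    (hconv : ∀ f : BoundedContinuousFunction ℝ ℝ,
      Tendsto (fun n => ∫ x, f x ∂(ρ n)) atTop (𝓝 (f 0)))
    {c : ℝ} (hc : 0 < c) :
    Tendsto (fun n => ((ρ n) {x | c ≤ |x|}).toReal) atTop (𝓝 0) := by
  have hgc : Continuous (fun x : ℝ => min 1 (max (2 / c * |x| - 1) 0)) :=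
    continuous_const.min (((continuous_const.mul continuous_abs).sub continuous_const).max
      continuous_const)
  have hg0 : ∀ x : ℝ, 0 ≤ min 1 (max (2 / c * |x| - 1) 0) :=
    fun x => le_min zero_le_one (le_max_right _ _)
  have hg1 : ∀ x : ℝ, min 1 (max (2 / c * |x| - 1) 0) ≤ 1 := fun x => min_le_left _ _
  set F : BoundedContinuousFunction ℝ ℝ :=
    BoundedContinuousFunction.mkOfBound ⟨fun x => min 1 (max (2 / c * |x| - 1) 0), hgc⟩ 1
      (fun x y => by
        rw [Real.dist_eq, abs_sub_le_iff]
        constructor <;> simp only [ContinuousMap.coe_mk] <;>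
          [linarith [hg1 x, hg0 y]; linarith [hg1 y, hg0 x]]) with hF
  have hF0 : F 0 = 0 := by
    have hF0' : F 0 = min 1 (max (2 / c * |(0:ℝ)| - 1) 0) := rfl
    rw [hF0']; norm_num
  have key := hconv F
  rw [hF0] at key
  refine squeeze_zero (fun n => ENNReal.toReal_nonneg) (fun n => ?_) key
  have hS : MeasurableSet {x : ℝ | c ≤ |x|} :=
    measurableSet_le measurable_const continuous_abs.measurable
  haveI := hprob n
  rw [← measureReal_def, ← integral_indicator_one hS]
  refine integral_mono ((integrable_const (1:ℝ)).indicator hS) (F.integrable (ρ n)) ?_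
  intro x
  by_cases hx : x ∈ {x : ℝ | c ≤ |x|}
  · rw [Set.indicator_of_mem hx]
    show (1:ℝ) ≤ min 1 (max (2 / c * |x| - 1) 0)
    have hcx : c ≤ |x| := hx
    have h2 : (1:ℝ) ≤ 2 / c * |x| - 1 := by
      have h3 : 2 / c * c ≤ 2 / c * |x| :=
        mul_le_mul_of_nonneg_left hcx (by positivity)
      have h4 : 2 / c * c = 2 := by field_simp
      linarith
    exact le_min le_rfl (le_max_of_le_left h2)
  · rw [Set.indicator_of_notMem hx]
    exact hg0 x

noncomputable def Gfun (ρ : Measure ℝ) (y : ℝ × ℝ) : ℝ :=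
  ∫ e : ℝ × ℝ, phid (y.1 + e.1, y.2 + e.2) ∂(ρ.prod ρ)

lemma Gfun_stronglyMeasurable (ρ : Measure ℝ) [SFinite ρ] :
    StronglyMeasurable (Gfun ρ) :=
  StronglyMeasurable.integral_prod_right'
    (f := fun q : (ℝ × ℝ) × (ℝ × ℝ) => phid (q.1.1 + q.2.1, q.1.2 + q.2.2))
    ((phid_measurable.comp
      (((measurable_fst.fst.add measurable_snd.fst)).prodMk
        ((measurable_fst.snd.add measurable_snd.snd)))).stronglyMeasurable)

lemma abs_Gfun_le (ρ : Measure ℝ) [IsProbabilityMeasure ρ] (y : ℝ × ℝ) : |Gfun ρ y| ≤ 1 := by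
  have := norm_integral_le_of_norm_le_const (μ := ρ.prod ρ)
    (f := fun e : ℝ × ℝ => phid (y.1 + e.1, y.2 + e.2)) (C := 1)
    (ae_of_all _ fun e => by simpa [Real.norm_eq_abs] using abs_phid_le _)
  simpa [Gfun, Real.norm_eq_abs, measure_univ] using this

lemma Gfun_tendsto (ρ : ℕ → Measure ℝ) (hprob : ∀ n, IsProbabilityMeasure (ρ n))
    (htail : ∀ c : ℝ, 0 < c →
      Tendsto (fun n => ((ρ n) {x | c ≤ |x|}).toReal) atTop (𝓝 0))
    (y : ℝ × ℝ) : Tendsto (fun n => Gfun (ρ n) y) atTop (𝓝 (phid y)) := by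
  haveI := hprob
  rcases eq_or_ne y.1 y.2 with h | h
  · have hz : ∀ n, Gfun (ρ n) y = 0 := by
      intro n
      have h1 : Gfun (ρ n) y = ∫ e : ℝ × ℝ, sgn0 (e.2 - e.1) ∂((ρ n).prod (ρ n)) := by
        unfold Gfun phid
        refine integral_congr_ae (ae_of_all _ fun e => ?_)
        congr 1
        rw [h]; ring
      have h2 : ∫ e : ℝ × ℝ, sgn0 (e.2 - e.1) ∂((ρ n).prod (ρ n))
          = ∫ e : ℝ × ℝ, sgn0 (e.1 - e.2) ∂((ρ n).prod (ρ n)) := by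
        have hsm : AEStronglyMeasurable (fun e : ℝ × ℝ => sgn0 (e.2 - e.1))
            (Measure.map Prod.swap ((ρ n).prod (ρ n))) :=
          (sgn0_measurable.comp (measurable_snd.sub measurable_fst)).aestronglyMeasurable
        conv_lhs => rw [← Measure.prod_swap]
        rw [integral_map measurable_swap.aemeasurable hsm]
        rfl
      have h3 : ∫ e : ℝ × ℝ, sgn0 (e.1 - e.2) ∂((ρ n).prod (ρ n))
          = - ∫ e : ℝ × ℝ, sgn0 (e.2 - e.1) ∂((ρ n).prod (ρ n)) := by
        rw [← integral_neg]
        refine integral_congr_ae (ae_of_all _ fun e => ?_)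
        show sgn0 (e.1 - e.2) = - sgn0 (e.2 - e.1)
        have hrr : e.1 - e.2 = -(e.2 - e.1) := by ring
        rw [hrr, sgn0_neg]
      have := h2.trans h3
      rw [h1]
      linarith [this]
    have hp : phid y = 0 := by unfold phid; rw [h, sub_self, sgn0_zero]
    rw [hp]
    simpa [hz] using (tendsto_const_nhds : Tendsto (fun _ : ℕ => (0:ℝ)) atTop (𝓝 0))
  · set s := y.2 - y.1 with hs
    have hsne : s ≠ 0 := sub_ne_zero.2 (Ne.symm h)
    have hpos : (0:ℝ) < |s| / 2 := by positivity
    have hb := htail (|s| / 2) hpos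
    have key : ∀ n, |Gfun (ρ n) y - phid y| ≤ 4 * ((ρ n) {x | |s| / 2 ≤ |x|}).toReal := by
      intro n
      set A := {x : ℝ | |s| / 2 ≤ |x|} with hA'
      have hA : MeasurableSet A := measurableSet_le measurable_const continuous_abs.measurable
      set ζ := (ρ n).prod (ρ n) with hζ
      have e1 : Gfun (ρ n) y = ∫ e : ℝ × ℝ, sgn0 (s + (e.2 - e.1)) ∂ζ := by
        unfold Gfun phid
        refine integral_congr_ae (ae_of_all _ fun e => ?_)
        congr 1; rw [hs]; ring
      have e2 : phid y = ∫ _e : ℝ × ℝ, sgn0 s ∂ζ := by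
        rw [integral_const]
        simp [phid, measure_univ, hs]
      have hint1 : Integrable (fun e : ℝ × ℝ => sgn0 (s + (e.2 - e.1))) ζ :=
        integrable_of_bdd ((sgn0_measurable.comp
          (measurable_const.add (measurable_snd.sub measurable_fst))).aestronglyMeasurable)
          (fun e => abs_sgn0_le _)
      have hint2 : Integrable (fun _e : ℝ × ℝ => sgn0 s) ζ := integrable_const _
      rw [e1, e2, ← integral_sub hint1 hint2]
      have hbd : ∀ e : ℝ × ℝ, ‖sgn0 (s + (e.2 - e.1)) - sgn0 s‖
          ≤ (2:ℝ) * (Set.indicator A (1 : ℝ → ℝ) e.1 + Set.indicator A (1 : ℝ → ℝ) e.2) := by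
        intro e
        rw [Real.norm_eq_abs]
        by_cases h1 : e.1 ∈ A
        · have hle : |sgn0 (s + (e.2 - e.1)) - sgn0 s| ≤ 2 := by
            rw [abs_sub_le_iff]
            constructor <;> linarith [abs_le.1 (abs_sgn0_le (s + (e.2 - e.1))),
              abs_le.1 (abs_sgn0_le s)]
          rw [Set.indicator_of_mem h1]
          have := Set.indicator_nonneg (s := A) (f := (1 : ℝ → ℝ)) (fun _ _ => zero_le_one) e.2
          simp only [Pi.one_apply]
          linarith
        · by_cases h2 : e.2 ∈ A
          · have hle : |sgn0 (s + (e.2 - e.1)) - sgn0 s| ≤ 2 := by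
              rw [abs_sub_le_iff]
              constructor <;> linarith [abs_le.1 (abs_sgn0_le (s + (e.2 - e.1))),
                abs_le.1 (abs_sgn0_le s)]
            rw [Set.indicator_of_mem h2]
            have := Set.indicator_nonneg (s := A) (f := (1 : ℝ → ℝ)) (fun _ _ => zero_le_one) e.1
            simp only [Pi.one_apply]
            linarith
          · have hx1 : |e.1| < |s| / 2 := by
              have := not_le.1 (fun hc => h1 (by simp only [hA', Set.mem_setOf_eq]; exact hc))
              exact this
            have hx2 : |e.2| < |s| / 2 := not_le.1 (fun hc => h2 (by simp only [hA', Set.mem_setOf_eq]; exact hc))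
            have habs' : |e.2 - e.1| ≤ |e.2| + |e.1| := by
              rw [sub_eq_add_neg]
              simpa [abs_neg] using abs_add_le e.2 (-e.1)
            have habs : |e.2 - e.1| < |s| := by linarith
            rw [sgn0_add_of_abs_lt habs, sub_self, abs_zero,
              Set.indicator_of_notMem h1, Set.indicator_of_notMem h2]
            norm_num
      have hind : ∀ x : ℝ, |Set.indicator A (1 : ℝ → ℝ) x| ≤ 1 := by
        intro x; by_cases hx : x ∈ A <;> simp [hx]
      have hindm : Measurable (Set.indicator A (1 : ℝ → ℝ)) :=
        measurable_const.indicator hA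
      have hi1 : Integrable (fun e : ℝ × ℝ => Set.indicator A (1 : ℝ → ℝ) e.1) ζ :=
        integrable_of_bdd ((hindm.comp measurable_fst).aestronglyMeasurable)
          (fun e => hind _)
      have hi2 : Integrable (fun e : ℝ × ℝ => Set.indicator A (1 : ℝ → ℝ) e.2) ζ :=
        integrable_of_bdd ((hindm.comp measurable_snd).aestronglyMeasurable)
          (fun e => hind _)
      have hintb : Integrable
          (fun e : ℝ × ℝ => (2:ℝ) * (Set.indicator A (1 : ℝ → ℝ) e.1 + Set.indicator A (1 : ℝ → ℝ) e.2)) ζ := by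
        simpa using (hi1.add hi2).const_mul (2:ℝ)
      have step1 : ‖∫ e : ℝ × ℝ, (sgn0 (s + (e.2 - e.1)) - sgn0 s) ∂ζ‖
          ≤ ∫ e : ℝ × ℝ, (2:ℝ) * (Set.indicator A (1 : ℝ → ℝ) e.1 + Set.indicator A (1 : ℝ → ℝ) e.2) ∂ζ :=
        norm_integral_le_of_norm_le hintb (ae_of_all _ hbd)
      have hfst : ∫ e : ℝ × ℝ, Set.indicator A (1 : ℝ → ℝ) e.1 ∂ζ = ((ρ n) A).toReal := by
        have h0 : ∫ x, Set.indicator A (1 : ℝ → ℝ) x ∂(Measure.map Prod.fst ζ)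
            = ∫ e : ℝ × ℝ, Set.indicator A (1 : ℝ → ℝ) e.1 ∂ζ :=
          integral_map measurable_fst.aemeasurable hindm.aestronglyMeasurable
        rw [← h0, hζ, Measure.map_fst_prod, measure_univ, one_smul,
          integral_indicator_one hA, measureReal_def]
      have hsnd : ∫ e : ℝ × ℝ, Set.indicator A (1 : ℝ → ℝ) e.2 ∂ζ = ((ρ n) A).toReal := by
        have h0 : ∫ x, Set.indicator A (1 : ℝ → ℝ) x ∂(Measure.map Prod.snd ζ)
            = ∫ e : ℝ × ℝ, Set.indicator A (1 : ℝ → ℝ) e.2 ∂ζ :=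
          integral_map measurable_snd.aemeasurable hindm.aestronglyMeasurable
        rw [← h0, hζ, Measure.map_snd_prod, measure_univ, one_smul,
          integral_indicator_one hA, measureReal_def]
      have step2 : ∫ e : ℝ × ℝ, (2:ℝ) * (Set.indicator A (1 : ℝ → ℝ) e.1 + Set.indicator A (1 : ℝ → ℝ) e.2) ∂ζ
          = 4 * ((ρ n) A).toReal := by
        rw [MeasureTheory.integral_const_mul, integral_add hi1 hi2, hfst, hsnd]; ring
      rw [Real.norm_eq_abs] at step1
      rw [step2] at step1
      exact step1
    rw [tendsto_iff_dist_tendsto_zero]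
    simp only [Real.dist_eq]
    refine squeeze_zero (fun n => abs_nonneg _) key ?_
    simpa using hb.const_mul (4:ℝ)

/-- The middle-swap measurable equivalence `((y1,y2),(e1,e2)) ≃ ((y1,e1),(y2,e2))`. -/
noncomputable def midSwap : ((ℝ × ℝ) × (ℝ × ℝ)) ≃ᵐ ((ℝ × ℝ) × (ℝ × ℝ)) :=
  (MeasurableEquiv.prodAssoc.trans
    ((MeasurableEquiv.refl ℝ).prodCongr
      (MeasurableEquiv.prodAssoc.symm.trans
        (((MeasurableEquiv.prodComm : ℝ × ℝ ≃ᵐ ℝ × ℝ).prodCongr (MeasurableEquiv.refl ℝ)).trans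
          MeasurableEquiv.prodAssoc)))).trans MeasurableEquiv.prodAssoc.symm

lemma midSwap_apply (q : (ℝ × ℝ) × (ℝ × ℝ)) :
    midSwap q = ((q.1.1, q.2.1), (q.1.2, q.2.2)) := by
  obtain ⟨⟨a, b⟩, ⟨c, d⟩⟩ := q; rfl

lemma midSwap_measurePreserving (m1 m2 ρ1 ρ2 : Measure ℝ)
    [SFinite m1] [SFinite m2] [SFinite ρ1] [SFinite ρ2] :
    MeasurePreserving midSwap ((m1.prod m2).prod (ρ1.prod ρ2))
      ((m1.prod ρ1).prod (m2.prod ρ2)) := by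
  have h1 : MeasurePreserving MeasurableEquiv.prodAssoc
      ((m1.prod m2).prod (ρ1.prod ρ2)) (m1.prod (m2.prod (ρ1.prod ρ2))) :=
    measurePreserving_prodAssoc _ _ _
  have hA : MeasurePreserving MeasurableEquiv.prodAssoc.symm
      (m2.prod (ρ1.prod ρ2)) ((m2.prod ρ1).prod ρ2) :=
    (measurePreserving_prodAssoc m2 ρ1 ρ2).symm _
  have hB : MeasurePreserving
      (⇑((MeasurableEquiv.prodComm : ℝ × ℝ ≃ᵐ ℝ × ℝ).prodCongr (MeasurableEquiv.refl ℝ)))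
      ((m2.prod ρ1).prod ρ2) ((ρ1.prod m2).prod ρ2) :=
    (Measure.measurePreserving_swap).prod (MeasurePreserving.id ρ2)
  have hC : MeasurePreserving MeasurableEquiv.prodAssoc
      ((ρ1.prod m2).prod ρ2) (ρ1.prod (m2.prod ρ2)) :=
    measurePreserving_prodAssoc _ _ _
  have hmid : MeasurePreserving
      (⇑(MeasurableEquiv.prodAssoc.symm.trans
        (((MeasurableEquiv.prodComm : ℝ × ℝ ≃ᵐ ℝ × ℝ).prodCongr (MeasurableEquiv.refl ℝ)).trans
          MeasurableEquiv.prodAssoc)))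
      (m2.prod (ρ1.prod ρ2)) (ρ1.prod (m2.prod ρ2)) :=
    (hC.comp hB).comp hA
  have h2 : MeasurePreserving
      (⇑((MeasurableEquiv.refl ℝ).prodCongr
        (MeasurableEquiv.prodAssoc.symm.trans
          (((MeasurableEquiv.prodComm : ℝ × ℝ ≃ᵐ ℝ × ℝ).prodCongr (MeasurableEquiv.refl ℝ)).trans
            MeasurableEquiv.prodAssoc))))
      (m1.prod (m2.prod (ρ1.prod ρ2))) (m1.prod (ρ1.prod (m2.prod ρ2))) :=
    (MeasurePreserving.id m1).prod hmid
  have h3 : MeasurePreserving MeasurableEquiv.prodAssoc.symm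
      (m1.prod (ρ1.prod (m2.prod ρ2))) ((m1.prod ρ1).prod (m2.prod ρ2)) :=
    (measurePreserving_prodAssoc m1 ρ1 (m2.prod ρ2)).symm _
  exact (h3.comp h2).comp h1

lemma integral_phid_map_add (m1 m2 ρ : Measure ℝ)
    [IsProbabilityMeasure m1] [IsProbabilityMeasure m2] [IsProbabilityMeasure ρ] :
    ∫ q, phid q ∂((((m1.prod ρ).map (fun q : ℝ × ℝ => q.1 + q.2))).prod
        ((m2.prod ρ).map (fun q : ℝ × ℝ => q.1 + q.2)))
      = ∫ y, Gfun ρ y ∂(m1.prod m2) := by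
  have hadd : Measurable (fun q : ℝ × ℝ => q.1 + q.2) := measurable_fst.add measurable_snd
  rw [Measure.map_prod_map _ _ hadd hadd,
    integral_map (hadd.prodMap hadd).aemeasurable phid_measurable.aestronglyMeasurable]
  have hmp := midSwap_measurePreserving m1 m2 ρ ρ
  rw [← hmp.integral_comp'
    (fun q => phid (Prod.map (fun q : ℝ × ℝ => q.1 + q.2) (fun q : ℝ × ℝ => q.1 + q.2) q))]
  have hfm : Measurable fun q : (ℝ × ℝ) × (ℝ × ℝ) => phid (q.1.1 + q.2.1, q.1.2 + q.2.2) :=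
    phid_measurable.comp ((measurable_fst.fst.add measurable_snd.fst).prodMk
      (measurable_fst.snd.add measurable_snd.snd))
  have hint : Integrable (fun q : (ℝ × ℝ) × (ℝ × ℝ) => phid (q.1.1 + q.2.1, q.1.2 + q.2.2))
      ((m1.prod m2).prod (ρ.prod ρ)) :=
    integrable_of_bdd hfm.aestronglyMeasurable (fun q => abs_phid_le _)
  calc ∫ q, phid (Prod.map (fun q : ℝ × ℝ => q.1 + q.2) (fun q : ℝ × ℝ => q.1 + q.2) (midSwap q))
        ∂((m1.prod m2).prod (ρ.prod ρ))
      = ∫ q, phid (q.1.1 + q.2.1, q.1.2 + q.2.2) ∂((m1.prod m2).prod (ρ.prod ρ)) :=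
        integral_congr_ae (ae_of_all _ fun q => by dsimp only; rw [midSwap_apply]; rfl)
    _ = ∫ y, ∫ e, phid ((y, e).1.1 + (y, e).2.1, (y, e).1.2 + (y, e).2.2) ∂(ρ.prod ρ)
        ∂(m1.prod m2) := integral_prod _ hint
    _ = ∫ y, Gfun ρ y ∂(m1.prod m2) := rfl



lemma map_add_noise_eq_compProd {Ω E : Type*} [MeasurableSpace Ω] [MeasurableSpace E]
    (P : Measure Ω) [IsProbabilityMeasure P] (X : Ω → E) (Y Z : Ω → ℝ)
    (hX : Measurable X) (hY : Measurable Y) (hZ : Measurable Z)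
    (hindep : IndepFun (fun ω => (X ω, Y ω)) Z P) :
    P.map (fun ω => (X ω, Y ω + Z ω))
      = (P.map X) ⊗ₘ (Kernel.map ((condDistrib Y X P) ×ₖ Kernel.const E (P.map Z))
          (fun q : ℝ × ℝ => q.1 + q.2)) := by
  set κ := condDistrib Y X P with hκ
  set ρ := P.map Z with hρ
  haveI : IsProbabilityMeasure ρ := Measure.isProbabilityMeasure_map hZ.aemeasurable
  haveI : IsProbabilityMeasure (P.map fun ω => (X ω, Y ω)) :=
    Measure.isProbabilityMeasure_map (hX.prodMk hY).aemeasurable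
  set η := Kernel.map (κ ×ₖ Kernel.const E ρ) (fun q : ℝ × ℝ => q.1 + q.2) with hη
  have hadd : Measurable (fun q : ℝ × ℝ => q.1 + q.2) := measurable_fst.add measurable_snd
  -- joint law of ((X, Y), Z) is a product
  have h1 : P.map (fun ω => ((X ω, Y ω), Z ω)) = (P.map fun ω => (X ω, Y ω)).prod ρ :=
    (indepFun_iff_map_prod_eq_prod_map_map (hX.prodMk hY).aemeasurable hZ.aemeasurable).1 hindep
  -- disintegration of the law of (X, Y)
  have h2 : P.map (fun ω => (X ω, Y ω)) = (P.map X) ⊗ₘ κ := by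
    have hfst : (P.map fun ω => (X ω, Y ω)).fst = P.map X := Measure.fst_map_prodMk hY
    rw [hκ, compProd_map_condDistrib hY.aemeasurable]
  -- express the left side as a pushforward
  have hΦ : Measurable (fun q : (E × ℝ) × ℝ => (q.1.1, q.1.2 + q.2)) :=
    (measurable_fst.fst).prodMk ((measurable_fst.snd).add measurable_snd)
  have h3 : P.map (fun ω => (X ω, Y ω + Z ω))
      = Measure.map (fun q : (E × ℝ) × ℝ => (q.1.1, q.1.2 + q.2))
          (P.map (fun ω => ((X ω, Y ω), Z ω))) := by
    rw [Measure.map_map hΦ ((hX.prodMk hY).prodMk hZ)]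
    rfl
  rw [h3, h1, h2]
  -- now prove equality of the two measures on all measurable sets
  ext s hs
  have hsec : ∀ x y, MeasurableSet {e : ℝ | (x, y + e) ∈ s} := by
    intro x y
    exact (measurable_const.prodMk (measurable_const.add measurable_id)) hs
  rw [Measure.map_apply hΦ hs, Measure.prod_apply (hΦ hs),
    Measure.compProd_apply hs]
  have hmeas1 : Measurable fun q : E × ℝ =>
      ρ (Prod.mk q ⁻¹' ((fun q : (E × ℝ) × ℝ => (q.1.1, q.1.2 + q.2)) ⁻¹' s)) :=
    measurable_measure_prodMk_left (hΦ hs)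
  rw [Measure.lintegral_compProd hmeas1]
  refine lintegral_congr fun x => ?_
  have hηx : η x = ((κ x).prod ρ).map (fun q : ℝ × ℝ => q.1 + q.2) := by
    rw [hη, Kernel.map_apply _ hadd, Kernel.prod_apply, Kernel.const_apply]
  rw [hηx, Measure.map_apply hadd (measurable_prodMk_left hs),
    Measure.prod_apply (hadd (measurable_prodMk_left hs))]
  refine lintegral_congr fun y => ?_
  rfl


lemma abs_integral_le_one {α : Type*} [MeasurableSpace α] (μ : Measure α) [IsProbabilityMeasure μ]
    {g : α → ℝ} (h : ∀ a, |g a| ≤ 1) : |∫ a, g a ∂μ| ≤ 1 := by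
  have := norm_integral_le_of_norm_le_const (μ := μ) (f := g) (C := 1)
    (ae_of_all _ fun a => by simpa [Real.norm_eq_abs] using h a)
  simpa [Real.norm_eq_abs, measure_univ] using this

end SepRobustAux

/-- Robustness of `Λ` against small perturbations of the response: if `εₙ → 0` in
distribution, each `εₙ` is independent of `(X, Y)`, and the quantile transforms of
`Y + εₙ` converge to that of `Y`, then `Λ(Y + εₙ | X) → Λ(Y|X)`. -/
theorem sepCoeff_robust_to_small_perturbations
    {p : ℕ} (hp : 1 ≤ p)
    {Ω : Type*} [MeasurableSpace Ω] (P : Measure Ω) [IsProbabilityMeasure P]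
    (X : Ω → (Fin p → ℝ)) (Y : Ω → ℝ)
    (hX : Measurable X) (hY : Measurable Y)
    (hXnd : ∃ k, Nondegenerate P fun ω => X ω k)
    (hYnd : Nondegenerate P Y)
    (ε : ℕ → Ω → ℝ) (hεm : ∀ n, Measurable (ε n))
    (hεdist : ∀ f : BoundedContinuousFunction ℝ ℝ,
      Tendsto (fun n => ∫ x, f x ∂(P.map (ε n))) atTop (𝓝 (f 0)))
    (hεindep : ∀ n, IndepFun (fun ω => (X ω, Y ω)) (ε n) P)
    (hquant : ∀ᵐ t ∂(volume.restrict (Set.Ioo (0 : ℝ) 1)),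
      Tendsto (fun n => mcdf (P.map fun ω => Y ω + ε n ω)
          (mquantile (P.map fun ω => Y ω + ε n ω) t)) atTop
        (𝓝 (mcdf (P.map Y) (mquantile (P.map Y) t)))) :
    Tendsto (fun n => sepCoeff P (fun ω => Y ω + ε n ω) X) atTop
      (𝓝 (sepCoeff P Y X)) := by
  classical
  open SepRobustAux in
  simp only [sepCoeff]
  haveI hPX : IsProbabilityMeasure (P.map X) := Measure.isProbabilityMeasure_map hX.aemeasurable
  set μX := P.map X with hμX
  set κ := condDistrib Y X P with hκdef
  set ρ := fun n => P.map (ε n) with hρ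
  have hρP : ∀ n, IsProbabilityMeasure (ρ n) := fun n =>
    Measure.isProbabilityMeasure_map (hεm n).aemeasurable
  have hadd : Measurable (fun q : ℝ × ℝ => q.1 + q.2) := measurable_fst.add measurable_snd
  have htail : ∀ c : ℝ, 0 < c →
      Tendsto (fun n => ((ρ n) {x | c ≤ |x|}).toReal) atTop (𝓝 0) := fun c hc =>
    tendsto_tail_measure ρ hρP hεdist hc
  set ηn := fun n => Kernel.map (κ ×ₖ Kernel.const (Fin p → ℝ) (ρ n))
    (fun q : ℝ × ℝ => q.1 + q.2) with hηn
  haveI hηM : ∀ n, IsMarkovKernel (ηn n) := fun n => Kernel.IsMarkovKernel.map _ hadd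
  have hae : ∀ n, ∀ᵐ x ∂μX, ηn n x = condDistrib (fun ω => Y ω + ε n ω) X P x := by
    intro n
    haveI := hηM n
    refine (condDistrib_ae_eq_of_measure_eq_compProd_of_measurable (κ := ηn n) hX (hY.add (hεm n)) ?_).mono fun x hx => hx.symm
    exact map_add_noise_eq_compProd P X Y (ε n) hX hY (hεm n) (hεindep n)
  set H := fun z : (Fin p → ℝ) × (Fin p → ℝ) => ∫ q, phid q ∂((κ z.1).prod (κ z.2)) with hH
  set Hn := fun n (z : (Fin p → ℝ) × (Fin p → ℝ)) =>
    ∫ q, Gfun (ρ n) q ∂((κ z.1).prod (κ z.2)) with hHn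
  have hkermeas : ∀ g : ℝ × ℝ → ℝ, StronglyMeasurable g →
      StronglyMeasurable
        (fun z : (Fin p → ℝ) × (Fin p → ℝ) => ∫ q, g q ∂((κ z.1).prod (κ z.2))) := by
    intro g hg
    have hmain := StronglyMeasurable.integral_kernel_prod_right'
      (κ := (κ.comap Prod.fst measurable_fst) ×ₖ (κ.comap Prod.snd measurable_snd))
      (f := fun zq : ((Fin p → ℝ) × (Fin p → ℝ)) × (ℝ × ℝ) => g zq.2)
      (hg.comp_measurable measurable_snd)
    have heq : ∀ z : (Fin p → ℝ) × (Fin p → ℝ),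
        ((κ.comap Prod.fst measurable_fst) ×ₖ (κ.comap Prod.snd measurable_snd)) z
          = (κ z.1).prod (κ z.2) := fun z => by
      rw [Kernel.prod_apply, Kernel.comap_apply, Kernel.comap_apply]
    simpa only [heq] using hmain
  have hHnSM : ∀ n, StronglyMeasurable (Hn n) := fun n =>
    hkermeas _ (Gfun_stronglyMeasurable (ρ n))
  have hHSM : StronglyMeasurable H := hkermeas _ phid_measurable.stronglyMeasurable
  have hprodP : ∀ z : (Fin p → ℝ) × (Fin p → ℝ),
      IsProbabilityMeasure ((κ z.1).prod (κ z.2)) := fun z => by infer_instance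
  have habsHn : ∀ n z, |Hn n z| ≤ 1 := fun n z => by
    haveI := hprodP z
    exact abs_integral_le_one _ (fun q => abs_Gfun_le (ρ n) q)
  have hconv : ∀ z, Tendsto (fun n => Hn n z) atTop (𝓝 (H z)) := by
    intro z
    haveI := hprodP z
    haveI := hρP
    exact tendsto_integral_of_dominated_convergence (bound := fun _ => (1:ℝ))
      (fun n => (Gfun_stronglyMeasurable (ρ n)).aestronglyMeasurable)
      (integrable_const _)
      (fun n => ae_of_all _ fun q => by
        simpa [Real.norm_eq_abs] using abs_Gfun_le (ρ n) q)
      (ae_of_all _ fun q => Gfun_tendsto ρ hρP htail q)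
  have hsq : ∀ (f : (Fin p → ℝ) × (Fin p → ℝ) → ℝ), StronglyMeasurable f →
      StronglyMeasurable (fun z => (f z) ^ 2) := fun f hf => by
    have : (fun z => (f z) ^ 2) = fun z => f z * f z := funext fun z => by ring
    rw [this]; exact hf.mul hf
  have houter : Tendsto (fun n => ∫ z, (Hn n z) ^ 2 ∂(μX.prod μX)) atTop
      (𝓝 (∫ z, (H z) ^ 2 ∂(μX.prod μX))) := by
    refine tendsto_integral_of_dominated_convergence (bound := fun _ => (1:ℝ))
      (fun n => (hsq _ (hHnSM n)).aestronglyMeasurable)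
      (integrable_const _)
      (fun n => ae_of_all _ fun z => ?_)
      (ae_of_all _ fun z => (hconv z).pow 2)
    obtain ⟨hl, hu⟩ := abs_le.1 (habsHn n z)
    rw [Real.norm_eq_abs, abs_of_nonneg (sq_nonneg _)]
    show Hn n z ^ 2 ≤ 1
    nlinarith
  have hηx : ∀ n (x : Fin p → ℝ),
      ηn n x = ((κ x).prod (ρ n)).map (fun q : ℝ × ℝ => q.1 + q.2) := fun n x => by
    rw [hηn, Kernel.map_apply _ hadd, Kernel.prod_apply, Kernel.const_apply]
  have hIeq : ∀ n, ∫ z : ((Fin p → ℝ) × (Fin p → ℝ)),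
      (relEffect (condDistrib (fun ω => Y ω + ε n ω) X P z.1)
          (condDistrib (fun ω => Y ω + ε n ω) X P z.2)
        - relEffect (condDistrib (fun ω => Y ω + ε n ω) X P z.2)
          (condDistrib (fun ω => Y ω + ε n ω) X P z.1)) ^ 2 ∂(μX.prod μX)
      = ∫ z, (Hn n z) ^ 2 ∂(μX.prod μX) := by
    intro n
    refine integral_congr_ae ?_
    have h1 := (Measure.quasiMeasurePreserving_fst (μ := μX) (ν := μX)).ae (hae n)
    have h2 := (Measure.quasiMeasurePreserving_snd (μ := μX) (ν := μX)).ae (hae n)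
    filter_upwards [h1, h2] with z hz1 hz2
    rw [← hz1, ← hz2]
    congr 1
    rw [hηx n z.1, hηx n z.2]
    haveI : IsProbabilityMeasure (((κ z.1).prod (ρ n)).map (fun q : ℝ × ℝ => q.1 + q.2)) := by
      haveI := hρP n
      exact Measure.isProbabilityMeasure_map hadd.aemeasurable
    haveI : IsProbabilityMeasure (((κ z.2).prod (ρ n)).map (fun q : ℝ × ℝ => q.1 + q.2)) := by
      haveI := hρP n
      exact Measure.isProbabilityMeasure_map hadd.aemeasurable
    haveI := hρP n
    rw [relEffect_sub, integral_phid_map_add]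
  have hIeq0 : ∫ z : ((Fin p → ℝ) × (Fin p → ℝ)),
      (relEffect (κ z.1) (κ z.2) - relEffect (κ z.2) (κ z.1)) ^ 2 ∂(μX.prod μX)
      = ∫ z, (H z) ^ 2 ∂(μX.prod μX) := by
    refine integral_congr_ae (ae_of_all _ fun z => ?_)
    show (relEffect (κ z.1) (κ z.2) - relEffect (κ z.2) (κ z.1)) ^ 2 = H z ^ 2
    congr 1
    exact relEffect_sub (κ z.1) (κ z.2)
  rw [hIeq0]
  refine Tendsto.const_mul _ ?_
  exact houter.congr (fun n => (hIeq n).symm)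
end
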